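/- arXiv:1104.5658 — 6 statements merged into one kernel-verified Lean document; each statement's English description precedes it below -/
import Mathlib

section
/- Let D be an m×m real irreducible matrix with d_ii ≥ 0, d_ij ≤ 0 for i ≠ j, and all row sums equal to zero. Then there exists a vector Λ ∈ R^m with Λ_i > 0 for all i and Dᵀ Λ = 0. -/
def MatIrreducible {m : ℕ} (D : Matrix (Fin m) (Fin m) ℝ) : Prop :=
  ∀ I : Finset (Fin m), I.Nonempty → I ≠ Finset.univ → ∃ i ∈ I, ∃ j, j ∉ I ∧ D i j ≠ 0

lemma aux_pos_kernel {m : ℕ}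
    (D : Matrix (Fin m) (Fin m) ℝ)
    (hdiag : ∀ i, 0 ≤ D i i)
    (hoff : ∀ i j, i ≠ j → D i j ≤ 0)
    (hrow : ∀ i, ∑ j, D i j = 0)
    (hirr : MatIrreducible D)
    (Λ : Fin m → ℝ) (hΛ : D.transpose.mulVec Λ = 0)
    (i₀ : Fin m) (hi₀ : 0 < Λ i₀) :
    ∃ Λ' : Fin m → ℝ, (∀ i, 0 < Λ' i) ∧ D.transpose.mulVec Λ' = 0 := by
  classical
  set c : ℝ := 1 + ∑ i, D i i with hc
  have hsum_nonneg : 0 ≤ ∑ i, D i i := Finset.sum_nonneg fun i _ => hdiag i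
  have hc1 : ∀ j, D j j + 1 ≤ c := by
    intro j
    have := Finset.single_le_sum (f := fun i => D i i) (fun i _ => hdiag i)
      (Finset.mem_univ j)
    simp only [hc]; linarith
  have hcpos : 0 < c := by simp only [hc]; linarith
  set E : Fin m → Fin m → ℝ := fun i j => (if i = j then c else 0) - D i j with hE
  have hEnn : ∀ i j, 0 ≤ E i j := by
    intro i j
    by_cases h : i = j
    · subst h; have := hc1 i; simp only [hE]; rw [if_pos trivial]; linarith
    · simp only [hE, if_neg h]; have := hoff i j h; linarith
  have hΛj : ∀ j, ∑ i, D i j * Λ i = 0 := by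
    intro j
    have := congrFun hΛ j
    simpa [Matrix.mulVec, dotProduct, Matrix.transpose_apply] using this
  have hEΛ : ∀ j, ∑ i, E i j * Λ i = c * Λ j := by
    intro j
    simp only [hE, sub_mul, Finset.sum_sub_distrib, hΛj j, sub_zero, ite_mul, zero_mul]
    simp [Finset.sum_ite_eq]
  set μ : Fin m → ℝ := fun i => max (Λ i) 0 with hμ
  have hμnn : ∀ i, 0 ≤ μ i := fun i => le_max_right _ _
  have hμi₀ : 0 < μ i₀ := lt_max_of_lt_left hi₀
  have h1 : ∀ j, c * μ j ≤ ∑ i, E i j * μ i := by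
    intro j
    have hb : (0:ℝ) ≤ ∑ i, E i j * μ i :=
      Finset.sum_nonneg fun i _ => mul_nonneg (hEnn i j) (hμnn i)
    have ha : ∑ i, E i j * Λ i ≤ ∑ i, E i j * μ i :=
      Finset.sum_le_sum fun i _ =>
        mul_le_mul_of_nonneg_left (le_max_left _ _) (hEnn i j)
    rcases le_total (Λ j) 0 with h | h
    · have : μ j = 0 := max_eq_right h
      rw [this, mul_zero]; exact hb
    · have : μ j = Λ j := max_eq_left h
      rw [this, ← hEΛ j]; exact ha
  have h2 : ∑ j, ∑ i, E i j * μ i = ∑ j, c * μ j := by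
    rw [Finset.sum_comm]
    have : ∀ i, ∑ j, E i j * μ i = c * μ i := by
      intro i
      rw [← Finset.sum_mul]
      congr 1
      simp only [hE, Finset.sum_sub_distrib, hrow i, sub_zero]
      simp [Finset.sum_ite_eq]
    simp_rw [this]
  have heq : ∀ j, c * μ j = ∑ i, E i j * μ i := by
    intro j
    have := (Finset.sum_eq_sum_iff_of_le (s := Finset.univ)
      (f := fun j => c * μ j) (g := fun j => ∑ i, E i j * μ i)
      (fun j _ => h1 j)).mp h2.symm
    exact this j (Finset.mem_univ j)
  have hpos : ∀ i, 0 < μ i := by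
    by_contra hcon
    push_neg at hcon
    obtain ⟨j₀, hj₀⟩ := hcon
    set I : Finset (Fin m) := Finset.univ.filter (fun i => 0 < μ i) with hI
    have hIne : I.Nonempty := ⟨i₀, by simp [hI, hμi₀]⟩
    have hInotuniv : I ≠ Finset.univ := by
      intro h
      have : j₀ ∈ I := h ▸ Finset.mem_univ j₀
      simp only [hI, Finset.mem_filter] at this
      exact absurd this.2 (not_lt.mpr hj₀)
    obtain ⟨i, hiI, j', hj'I, hD⟩ := hirr I hIne hInotuniv
    have hμi : 0 < μ i := (Finset.mem_filter.mp hiI).2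
    have hμj' : μ j' = 0 := by
      have : ¬ 0 < μ j' := fun h => hj'I (Finset.mem_filter.mpr ⟨Finset.mem_univ _, h⟩)
      linarith [hμnn j', not_lt.mp this]
    have hzero : ∑ i, E i j' * μ i = 0 := by rw [← heq j', hμj', mul_zero]
    have hterm : E i j' * μ i = 0 :=
      (Finset.sum_eq_zero_iff_of_nonneg
        (fun k _ => mul_nonneg (hEnn k j') (hμnn k))).mp hzero i (Finset.mem_univ i)
    have hEij : E i j' = 0 := by
      rcases mul_eq_zero.mp hterm with h | h
      · exact h
      · exact absurd h (ne_of_gt hμi)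
    have hij : i ≠ j' := by
      intro h; subst h; rw [hμj'] at hμi; exact lt_irrefl _ hμi
    simp only [hE, if_neg hij, zero_sub, neg_eq_zero] at hEij
    exact hD hEij
  refine ⟨μ, hpos, ?_⟩
  funext j
  have : ∑ i, D i j * μ i = 0 := by
    have : ∀ i, D i j * μ i = (if i = j then c else 0) * μ i - E i j * μ i := by
      intro i; simp only [hE]; ring
    simp_rw [this]
    rw [Finset.sum_sub_distrib, ← heq j]
    simp [Finset.sum_ite_eq]
  simpa [Matrix.mulVec, dotProduct, Matrix.transpose_apply] using this

/-- An irreducible matrix with nonnegative diagonal, nonpositive off-diagonal entries and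
zero row sums admits a strictly positive vector `Λ` with `Dᵀ Λ = 0`. -/
theorem exists_positive_left_kernel {m : ℕ}
    (D : Matrix (Fin m) (Fin m) ℝ)
    (hdiag : ∀ i, 0 ≤ D i i)
    (hoff : ∀ i j, i ≠ j → D i j ≤ 0)
    (hrow : ∀ i, ∑ j, D i j = 0)
    (hirr : MatIrreducible D) :
    ∃ Λ : Fin m → ℝ, (∀ i, 0 < Λ i) ∧ D.transpose.mulVec Λ = 0 := by
  classical
  rcases isEmpty_or_nonempty (Fin m) with hemp | hne
  · exact ⟨fun _ => 1, fun i => (hemp.false i).elim,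
      funext fun j => (hemp.false j).elim⟩
  · have hdet : D.det = 0 := by
      rw [← Matrix.exists_mulVec_eq_zero_iff]
      refine ⟨fun _ => 1, ?_, ?_⟩
      · intro h
        have := congrFun h (Classical.arbitrary (Fin m))
        simp at this
      · funext j
        simpa [Matrix.mulVec, dotProduct] using hrow j
    have hdetT : D.transpose.det = 0 := by rw [Matrix.det_transpose]; exact hdet
    obtain ⟨Λ₀, hΛ₀ne, hΛ₀⟩ := Matrix.exists_mulVec_eq_zero_iff.mpr hdetT
    obtain ⟨i, hi⟩ := Function.ne_iff.mp hΛ₀ne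
    rcases lt_or_gt_of_ne hi with h | h
    · refine aux_pos_kernel D hdiag hoff hrow hirr (-Λ₀) ?_ i ?_
      · rw [Matrix.mulVec_neg, hΛ₀, neg_zero]
      · simpa using h
    · exact aux_pos_kernel D hdiag hoff hrow hirr Λ₀ hΛ₀ i h
end

section
/- Let D be an m×m real irreducible matrix with d_ii ≥ 0, d_ij ≤ 0 for i ≠ j, and ∑_j d_ij ≥ 0 for every i (row sums only nonnegative). Then there exists a vector Λ ∈ R^m with Λ_i > 0 for all i and Dᵀ Λ ≥ 0 componentwise. -/
open Finset Matrix

section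
variable {m : ℕ} (P : Matrix (Fin m) (Fin m) ℝ)

lemma auxPowNonneg (hP : ∀ i j, 0 ≤ P i j) : ∀ k i j, 0 ≤ (P ^ k) i j := by
  intro k
  induction k with
  | zero => intro i j; simp [Matrix.one_apply]; split <;> norm_num
  | succ k ih =>
    intro i j
    rw [pow_succ, Matrix.mul_apply]
    exact Finset.sum_nonneg fun t _ => mul_nonneg (ih i t) (hP t j)

lemma auxRowOne : ∀ i : Fin m, ∑ j, (1 : Matrix (Fin m) (Fin m) ℝ) i j = 1 := by
  intro i; simp [Matrix.one_apply]

lemma auxRleOne (hP : ∀ i j, 0 ≤ P i j) (hrow : ∀ i, ∑ j, P i j ≤ 1) :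
    ∀ k i, ∑ j, (P ^ k) i j ≤ 1 := by
  intro k
  induction k with
  | zero => intro i; simp [auxRowOne]
  | succ k ih =>
    intro i
    calc ∑ j, (P ^ (k+1)) i j = ∑ j, ∑ t, P i t * (P ^ k) t j := by
          simp [pow_succ', Matrix.mul_apply]
      _ = ∑ t, P i t * ∑ j, (P ^ k) t j := by
          rw [Finset.sum_comm]; simp [Finset.mul_sum]
      _ ≤ ∑ t, P i t * 1 := by
          refine Finset.sum_le_sum fun t _ => mul_le_mul_of_nonneg_left (ih t) (hP i t)
      _ ≤ 1 := by simpa using hrow i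

lemma auxRsucc (hP : ∀ i j, 0 ≤ P i j) (hrow : ∀ i, ∑ j, P i j ≤ 1) :
    ∀ k i, ∑ j, (P ^ (k+1)) i j ≤ ∑ j, (P ^ k) i j := by
  intro k i
  calc ∑ j, (P ^ (k+1)) i j = ∑ t, (P ^ k) i t * ∑ j, P t j := by
        rw [pow_succ]
        simp [Matrix.mul_apply]
        rw [Finset.sum_comm]; simp [Finset.mul_sum]
    _ ≤ ∑ t, (P ^ k) i t * 1 := by
        refine Finset.sum_le_sum fun t _ => mul_le_mul_of_nonneg_left (hrow t) (auxPowNonneg P hP k i t)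
    _ = ∑ j, (P ^ k) i j := by simp

lemma auxSpread (hP : ∀ i j, 0 ≤ P i j) (hrow : ∀ i, ∑ j, P i j ≤ 1)
    (hconn : ∀ I : Finset (Fin m), I.Nonempty → I ≠ Finset.univ →
      ∃ i ∈ I, ∃ j, j ∉ I ∧ 0 < P i j)
    (hm : 0 < m) (i0 : Fin m) (h0 : ∑ j, P i0 j < 1) :
    ∀ i, ∑ j, (P ^ m) i j < 1 := by
  set Sk : ℕ → Finset (Fin m) := fun k => univ.filter (fun i => ∑ j, (P ^ k) i j < 1) with hSk
  have hmem : ∀ k i, i ∈ Sk k ↔ ∑ j, (P ^ k) i j < 1 := by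
    intro k i; simp [hSk]
  have hsub : ∀ k, Sk k ⊆ Sk (k+1) := by
    intro k i hi
    rw [hmem] at hi ⊢
    exact lt_of_le_of_lt (auxRsucc P hP hrow k i) hi
  have hstep : ∀ k, (Sk k).Nonempty → Sk k ≠ univ → ∃ i ∈ Sk (k+1), i ∉ Sk k := by
    intro k hne hnu
    have hIne : (univ \ Sk k).Nonempty := by
      rw [Finset.sdiff_nonempty]
      intro hsub'
      exact hnu (Finset.eq_univ_iff_forall.mpr fun x => hsub' (Finset.mem_univ x))
    have hInu : (univ \ Sk k) ≠ univ := by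
      obtain ⟨x, hx⟩ := hne
      intro h
      have : x ∈ univ \ Sk k := by rw [h]; exact Finset.mem_univ x
      simp [Finset.mem_sdiff] at this
      exact this hx
    obtain ⟨i, hi, j, hj, hij⟩ := hconn (univ \ Sk k) hIne hInu
    have hiS : i ∉ Sk k := by simp [Finset.mem_sdiff] at hi; exact hi
    have hjS : j ∈ Sk k := by
      by_contra h
      exact hj (by simp [Finset.mem_sdiff, h])
    refine ⟨i, ?_, hiS⟩
    rw [hmem]
    have hjlt : ∑ t, (P ^ k) j t < 1 := (hmem k j).mp hjS
    calc ∑ t, (P ^ (k+1)) i t = ∑ s', P i s' * ∑ t, (P ^ k) s' t := by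
          simp only [pow_succ', Matrix.mul_apply]
          rw [Finset.sum_comm]; simp [Finset.mul_sum]
      _ < ∑ s', P i s' * 1 := by
          refine Finset.sum_lt_sum (fun t _ => mul_le_mul_of_nonneg_left (auxRleOne P hP hrow k t) (hP i t)) ⟨j, Finset.mem_univ j, ?_⟩
          exact mul_lt_mul_of_pos_left hjlt hij
      _ ≤ 1 := by simpa using hrow i
  have hcard : ∀ k, 1 ≤ k → (Sk k = univ ∨ k ≤ (Sk k).card) := by
    intro k hk
    induction k, hk using Nat.le_induction with
    | base =>
      right
      have : i0 ∈ Sk 1 := by rw [hmem]; simpa using h0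
      exact Finset.card_pos.mpr ⟨i0, this⟩
    | succ n hn ih =>
      rcases ih with h | h
      · left
        exact Finset.eq_univ_of_forall fun x => hsub n (by rw [h]; exact Finset.mem_univ x)
      · by_cases hu : Sk n = univ
        · left
          exact Finset.eq_univ_of_forall fun x => hsub n (by rw [hu]; exact Finset.mem_univ x)
        · right
          have hne : (Sk n).Nonempty := Finset.card_pos.mp (by omega)
          obtain ⟨i, hi1, hi2⟩ := hstep n hne hu
          have hss : Sk n ⊂ Sk (n+1) :=
            (Finset.ssubset_iff_of_subset (hsub n)).mpr ⟨i, hi1, hi2⟩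
          have := Finset.card_lt_card hss
          omega
  have hSm : Sk m = univ := by
    rcases hcard m hm with h | h
    · exact h
    · have h1 : (Sk m).card = m := le_antisymm (by simpa using Finset.card_le_univ (Sk m)) h
      exact Finset.eq_univ_of_card _ (by rw [h1, Fintype.card_fin])
  intro i
  have : i ∈ Sk m := hSm ▸ Finset.mem_univ i
  exact (hmem m i).mp this

lemma auxGeom (hP : ∀ i j, 0 ≤ P i j) (hrow : ∀ i, ∑ j, P i j ≤ 1)
    (c : ℝ) (hc0 : 0 ≤ c) (hcm : ∀ i, ∑ j, (P ^ m) i j ≤ c) :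
    ∀ n i, ∑ j, (P ^ (m * n)) i j ≤ c ^ n := by
  intro n
  induction n with
  | zero => intro i; simpa using le_of_eq (by simp [auxRowOne])
  | succ n ih =>
    intro i
    have hmn : m * (n + 1) = m * n + m := by ring
    calc ∑ j, (P ^ (m * (n+1))) i j
        = ∑ t, (P ^ (m*n)) i t * ∑ j, (P ^ m) t j := by
          rw [hmn, pow_add]
          simp [Matrix.mul_apply]
          rw [Finset.sum_comm]; simp [Finset.mul_sum]
      _ ≤ ∑ t, (P ^ (m*n)) i t * c := by
          refine Finset.sum_le_sum fun t _ =>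
            mul_le_mul_of_nonneg_left (hcm t) (auxPowNonneg P hP (m*n) i t)
      _ = (∑ t, (P ^ (m*n)) i t) * c := by rw [Finset.sum_mul]
      _ ≤ c ^ n * c := mul_le_mul_of_nonneg_right (ih i) hc0
      _ = c ^ (n+1) := by ring
end


/-- An irreducible matrix with nonnegative diagonal, nonpositive off-diagonal entries and
nonnegative row sums admits a strictly positive vector `Λ` with `Dᵀ Λ ≥ 0` componentwise. -/
theorem exists_positive_left_supersolution {m : ℕ}
    (D : Matrix (Fin m) (Fin m) ℝ)
    (hdiag : ∀ i, 0 ≤ D i i)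
    (hoff : ∀ i j, i ≠ j → D i j ≤ 0)
    (hrow : ∀ i, 0 ≤ ∑ j, D i j)
    (hirr : MatIrreducible D) :
    ∃ Λ : Fin m → ℝ, (∀ i, 0 < Λ i) ∧ ∀ j, 0 ≤ D.transpose.mulVec Λ j := by
  rcases Nat.eq_zero_or_pos m with hm | hm
  · subst hm
    exact ⟨fun _ => 1, fun i => i.elim0, fun j => j.elim0⟩
  set s : ℝ := 1 + ∑ i, D i i with hs
  have hs0 : 0 < s := by
    have : 0 ≤ ∑ i, D i i := Finset.sum_nonneg fun i _ => hdiag i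
    rw [hs]; linarith
  set P : Matrix (Fin m) (Fin m) ℝ :=
    Matrix.of fun i j => (if i = j then (1:ℝ) else 0) - D i j / s with hPdef
  have hPapp : ∀ i j, P i j = (if i = j then (1:ℝ) else 0) - D i j / s := fun i j => rfl
  have hD : ∀ i j, D i j = s * ((if i = j then (1:ℝ) else 0) - P i j) := by
    intro i j
    rw [hPapp, sub_sub_cancel]
    field_simp
  have hP : ∀ i j, 0 ≤ P i j := by
    intro i j
    rw [hPapp]
    by_cases h : i = j
    · subst h
      rw [if_pos rfl]
      have h1 : D i i ≤ s := by
        have := Finset.single_le_sum (fun t (_ : t ∈ univ) => hdiag t) (Finset.mem_univ i)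
        rw [hs]; linarith
      have : D i i / s ≤ 1 := (div_le_one hs0).mpr h1
      linarith
    · simp only [if_neg h]
      have : D i j ≤ 0 := hoff i j h
      have : D i j / s ≤ 0 := div_nonpos_of_nonpos_of_nonneg this hs0.le
      linarith
  have hrowP : ∀ i, ∑ j, P i j = 1 - (∑ j, D i j) / s := by
    intro i
    simp only [hPapp]
    rw [Finset.sum_sub_distrib, ← Finset.sum_div]
    congr 1
    simp
  have hrowP1 : ∀ i, ∑ j, P i j ≤ 1 := by
    intro i
    rw [hrowP]
    have : 0 ≤ (∑ j, D i j) / s := div_nonneg (hrow i) (le_of_lt hs0)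
    linarith
  have hconn : ∀ I : Finset (Fin m), I.Nonempty → I ≠ Finset.univ →
      ∃ i ∈ I, ∃ j, j ∉ I ∧ 0 < P i j := by
    intro I h1 h2
    obtain ⟨i, hi, j, hj, hij⟩ := hirr I h1 h2
    refine ⟨i, hi, j, hj, ?_⟩
    have hne : i ≠ j := fun h => hj (h ▸ hi)
    have : D i j < 0 := lt_of_le_of_ne (hoff i j hne) hij
    rw [hPapp, if_neg hne]
    have : D i j / s < 0 := div_neg_of_neg_of_pos this hs0
    linarith
  -- final computation lemma
  have hfin : ∀ (w : Fin m → ℝ) (j : Fin m),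
      D.transpose.mulVec w j = s * (w j - ∑ i, P i j * w i) := by
    intro w j
    have h1 : D.transpose.mulVec w j = ∑ i, D i j * w i := by
      simp [Matrix.mulVec, dotProduct, Matrix.transpose_apply]
    rw [h1]
    calc ∑ i, D i j * w i
        = ∑ i, ((if i = j then (1:ℝ) else 0) * w i - P i j * w i) * s := by
          refine Finset.sum_congr rfl fun i _ => ?_
          rw [hD i j]; ring
      _ = ((∑ i, (if i = j then (1:ℝ) else 0) * w i) - ∑ i, P i j * w i) * s := by
          rw [← Finset.sum_sub_distrib, Finset.sum_mul]
      _ = s * (w j - ∑ i, P i j * w i) := by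
          have he : ∑ i, (if i = j then (1:ℝ) else 0) * w i = w j := by
            simp [ite_mul]
          rw [he]; ring
  by_cases hall : ∀ i, ∑ j, D i j = 0
  · -- all row sums vanish: stochastic case
    have hstoch : ∀ i, ∑ j, P i j = 1 := by
      intro i; rw [hrowP, hall i]; simp
    have hdet : (1 - P).det = 0 := by
      rw [← Matrix.exists_mulVec_eq_zero_iff]
      refine ⟨fun _ => 1, ?_, ?_⟩
      · intro h
        have := congrFun h ⟨0, hm⟩
        norm_num at this
      · funext j
        have : ((1 - P) *ᵥ (fun _ => (1:ℝ))) j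
            = (∑ i, (if j = i then (1:ℝ) else 0)) - ∑ i, P j i := by
          simp [Matrix.mulVec, dotProduct, Matrix.sub_apply, Matrix.one_apply,
            Finset.sum_sub_distrib]
        rw [this]
        simp [hstoch j]
    have hdetT : ((1 - P).transpose).det = 0 := by
      rw [Matrix.det_transpose]; exact hdet
    obtain ⟨v, hv0, hveq⟩ := Matrix.exists_mulVec_eq_zero_iff.mpr hdetT
    have heig : ∀ j, v j = ∑ i, P i j * v i := by
      intro j
      have h1 := congrFun hveq j
      have h2 : ∑ i, ((if i = j then (1:ℝ) else 0) - P i j) * v i = 0 := by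
        simpa [Matrix.mulVec, dotProduct, Matrix.transpose_apply, Matrix.sub_apply,
          Matrix.one_apply] using h1
      have h3 : (∑ i, (if i = j then (1:ℝ) else 0) * v i) - ∑ i, P i j * v i = 0 := by
        rw [← Finset.sum_sub_distrib]
        simpa [sub_mul] using h2
      have h4 : ∑ i, (if i = j then (1:ℝ) else 0) * v i = v j := by simp [ite_mul]
      rw [h4] at h3
      linarith
    set w : Fin m → ℝ := fun i => |v i| with hw
    have hWle : ∀ j, w j ≤ ∑ i, P i j * w i := by
      intro j
      calc w j = |∑ i, P i j * v i| := by rw [hw]; simp [heig j]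
        _ ≤ ∑ i, |P i j * v i| := Finset.abs_sum_le_sum_abs _ _
        _ = ∑ i, P i j * w i :=
            Finset.sum_congr rfl fun i _ => by rw [abs_mul, abs_of_nonneg (hP i j)]
    have hsumeq : ∑ j, ∑ i, P i j * w i = ∑ j, w j := by
      rw [Finset.sum_comm]
      calc ∑ i, ∑ j, P i j * w i = ∑ i, (∑ j, P i j) * w i := by
            refine Finset.sum_congr rfl fun i _ => ?_
            rw [Finset.sum_mul]
        _ = ∑ i, w i := by
            refine Finset.sum_congr rfl fun i _ => ?_
            rw [hstoch i, one_mul]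
    have heqw : ∀ j, w j = ∑ i, P i j * w i := by
      have hz : ∑ j, (∑ i, P i j * w i - w j) = 0 := by
        rw [Finset.sum_sub_distrib, hsumeq, sub_self]
      have h0 : ∀ j ∈ univ, 0 ≤ ∑ i, P i j * w i - w j :=
        fun j _ => sub_nonneg.mpr (hWle j)
      have hall0 := (Finset.sum_eq_zero_iff_of_nonneg h0).mp hz
      intro j
      have := hall0 j (Finset.mem_univ j)
      linarith
    have hwnn : ∀ i, 0 ≤ w i := fun i => abs_nonneg _
    have hwpos : ∀ i, 0 < w i := by
      by_contra hcon
      push_neg at hcon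
      obtain ⟨j0, hj0⟩ := hcon
      have hw0 : w j0 = 0 := le_antisymm hj0 (hwnn j0)
      set S := univ.filter fun i => w i ≠ 0 with hS
      have hSne : S.Nonempty := by
        obtain ⟨i, hi⟩ := Function.ne_iff.mp hv0
        simp only [Pi.zero_apply] at hi
        exact ⟨i, by simp [hS, hw, hi]⟩
      have hSnu : S ≠ univ := by
        intro h
        have : j0 ∈ S := by rw [h]; exact Finset.mem_univ j0
        simp [hS] at this
        exact this hw0
      obtain ⟨i, hi, j, hj, hij⟩ := hconn S hSne hSnu
      have hwj : w j = 0 := by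
        by_contra h
        exact hj (by simp [hS, h])
      have hwi : 0 < w i := by
        simp [hS] at hi
        exact lt_of_le_of_ne (hwnn i) (Ne.symm hi)
      have hlt : 0 < ∑ t, P t j * w t := by
        refine lt_of_lt_of_le (mul_pos hij hwi) ?_
        exact Finset.single_le_sum (f := fun t => P t j * w t)
          (fun t _ => mul_nonneg (hP t j) (hwnn t)) (Finset.mem_univ i)
      rw [← heqw j, hwj] at hlt
      exact lt_irrefl 0 hlt
    refine ⟨w, hwpos, fun j => ?_⟩
    rw [hfin w j, ← heqw j]
    simp
  · -- some row sum is positive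
    push_neg at hall
    obtain ⟨i0, hi0⟩ := hall
    have hi0' : 0 < ∑ j, D i0 j := lt_of_le_of_ne (hrow i0) (Ne.symm hi0)
    have h0 : ∑ j, P i0 j < 1 := by
      rw [hrowP]
      have : 0 < (∑ j, D i0 j) / s := div_pos hi0' hs0
      linarith
    have hdef : ∀ i, ∑ j, (P ^ m) i j < 1 := auxSpread P hP hrowP1 hconn hm i0 h0
    -- invertibility of (1 - P)
    have hdetne : (1 - P).det ≠ 0 := by
      intro hdet
      obtain ⟨v, hv0, hveq⟩ := Matrix.exists_mulVec_eq_zero_iff.mpr hdet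
      have hfix : ∀ i, v i = ∑ j, P i j * v j := by
        intro i
        have h1 := congrFun hveq i
        have h2 : ∑ j, ((if i = j then (1:ℝ) else 0) - P i j) * v j = 0 := by
          simpa [Matrix.mulVec, dotProduct, Matrix.sub_apply, Matrix.one_apply]
            using h1
        have h3 : (∑ j, (if i = j then (1:ℝ) else 0) * v j) - ∑ j, P i j * v j = 0 := by
          rw [← Finset.sum_sub_distrib]
          simpa [sub_mul] using h2
        have h4 : ∑ j, (if i = j then (1:ℝ) else 0) * v j = v i := by simp [ite_mul]
        rw [h4] at h3
        linarith
      have hfixk : ∀ k i, v i = ∑ j, (P ^ k) i j * v j := by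
        intro k
        induction k with
        | zero => intro i; simp [Matrix.one_apply, ite_mul]
        | succ k ih =>
          intro i
          calc v i = ∑ t, P i t * v t := hfix i
            _ = ∑ t, P i t * ∑ j, (P ^ k) t j * v j :=
                Finset.sum_congr rfl fun t _ => by rw [← ih t]
            _ = ∑ t, ∑ j, P i t * ((P ^ k) t j * v j) := by
                refine Finset.sum_congr rfl fun t _ => ?_
                rw [Finset.mul_sum]
            _ = ∑ j, ∑ t, P i t * ((P ^ k) t j * v j) := Finset.sum_comm
            _ = ∑ j, (P ^ (k+1)) i j * v j := by
                refine Finset.sum_congr rfl fun j _ => ?_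
                rw [pow_succ', Matrix.mul_apply, Finset.sum_mul]
                refine Finset.sum_congr rfl fun t _ => by ring
      obtain ⟨i2, _, hi2⟩ := Finset.exists_max_image univ (fun i => |v i|) ⟨⟨0, hm⟩, Finset.mem_univ _⟩
      set M := |v i2| with hM
      have hMpos : 0 < M := by
        obtain ⟨i, hi⟩ := Function.ne_iff.mp hv0
        simp only [Pi.zero_apply] at hi
        exact lt_of_lt_of_le (abs_pos.mpr hi) (hi2 i (Finset.mem_univ i))
      have hMle : M ≤ (∑ j, (P ^ m) i2 j) * M := by
        calc M = |∑ j, (P ^ m) i2 j * v j| := by rw [hM]; simp [← hfixk m i2]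
          _ ≤ ∑ j, |(P ^ m) i2 j * v j| := Finset.abs_sum_le_sum_abs _ _
          _ = ∑ j, (P ^ m) i2 j * |v j| := Finset.sum_congr rfl fun j _ => by
              rw [abs_mul, abs_of_nonneg (auxPowNonneg P hP m i2 j)]
          _ ≤ ∑ j, (P ^ m) i2 j * M := Finset.sum_le_sum fun j _ =>
              mul_le_mul_of_nonneg_left (hi2 j (Finset.mem_univ j)) (auxPowNonneg P hP m i2 j)
          _ = (∑ j, (P ^ m) i2 j) * M := by rw [Finset.sum_mul]
      have : (∑ j, (P ^ m) i2 j) * M < 1 * M := mul_lt_mul_of_pos_right (hdef i2) hMpos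
      linarith
    have hUnit : IsUnit ((1 - P).transpose).det := by
      rw [Matrix.det_transpose]
      exact isUnit_iff_ne_zero.mpr hdetne
    set A := (1 - P).transpose with hA
    set Λ : Fin m → ℝ := A⁻¹ *ᵥ (fun _ => (1:ℝ)) with hΛ
    have hsolve : A *ᵥ Λ = fun _ => (1:ℝ) := by
      rw [hΛ, Matrix.mulVec_mulVec, Matrix.mul_nonsing_inv _ hUnit, Matrix.one_mulVec]
    have hlin : ∀ j, Λ j = 1 + ∑ i, P i j * Λ i := by
      intro j
      have h1 := congrFun hsolve j
      have h2 : ∑ i, ((if j = i then (1:ℝ) else 0) - P i j) * Λ i = 1 := by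
        simpa [hA, Matrix.mulVec, dotProduct, Matrix.transpose_apply, Matrix.sub_apply,
          Matrix.one_apply] using h1
      have h3 : (∑ i, (if j = i then (1:ℝ) else 0) * Λ i) - ∑ i, P i j * Λ i = 1 := by
        rw [← Finset.sum_sub_distrib]
        simpa [sub_mul] using h2
      have h4 : ∑ i, (if j = i then (1:ℝ) else 0) * Λ i = Λ j := by simp [ite_mul]
      rw [h4] at h3
      linarith
    set u : ℕ → Fin m → ℝ := fun N j => ∑ i, (P ^ N) i j * Λ i with hu
    have hu1 : ∀ j, u 1 j = ∑ i, P i j * Λ i := by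
      intro j; rw [hu]; simp
    have hu1' : ∀ j, u 1 j = Λ j - 1 := by
      intro j; rw [hu1 j]; have := hlin j; linarith
    have hrec : ∀ N j, u (N+1) j = ∑ t, P t j * u N t := by
      intro N j
      rw [hu]
      calc ∑ i, (P ^ (N+1)) i j * Λ i
          = ∑ i, (∑ t, (P ^ N) i t * P t j) * Λ i := by
            refine Finset.sum_congr rfl fun i _ => ?_
            rw [pow_succ, Matrix.mul_apply]
        _ = ∑ i, ∑ t, (P ^ N) i t * P t j * Λ i := by
            refine Finset.sum_congr rfl fun i _ => ?_
            rw [Finset.sum_mul]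
        _ = ∑ t, ∑ i, (P ^ N) i t * P t j * Λ i := Finset.sum_comm
        _ = ∑ t, P t j * u N t := by
            refine Finset.sum_congr rfl fun t _ => ?_
            rw [Finset.mul_sum]
            refine Finset.sum_congr rfl fun i _ => by ring
    have hdec : ∀ N j, u (N+2) j ≤ u (N+1) j := by
      intro N
      induction N with
      | zero =>
        intro j
        rw [hrec 1 j]
        calc ∑ t, P t j * u 1 t = ∑ t, (P t j * Λ t - P t j) := by
              refine Finset.sum_congr rfl fun t _ => ?_
              rw [hu1' t]; ring
          _ = (∑ t, P t j * Λ t) - ∑ t, P t j := Finset.sum_sub_distrib _ _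
          _ ≤ ∑ t, P t j * Λ t := sub_le_self _ (Finset.sum_nonneg fun t _ => hP t j)
          _ = u 1 j := (hu1 j).symm
      | succ N ih =>
        intro j
        rw [hrec (N+2) j, hrec (N+1) j]
        exact Finset.sum_le_sum fun t _ => mul_le_mul_of_nonneg_left (ih t) (hP t j)
    have hchain : ∀ N j, u (N+1) j ≤ Λ j - 1 := by
      intro N
      induction N with
      | zero => intro j; rw [hu1' j]
      | succ N ih => intro j; exact le_trans (hdec N j) (ih j)
    obtain ⟨i3, _, hi3⟩ := Finset.exists_max_image univ (fun i => |Λ i|) ⟨⟨0, hm⟩, Finset.mem_univ _⟩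
    set M' := |Λ i3| with hM'
    have hM'0 : 0 ≤ M' := abs_nonneg _
    obtain ⟨i1, _, hi1⟩ := Finset.exists_max_image univ (fun i => ∑ j, (P ^ m) i j)
      ⟨⟨0, hm⟩, Finset.mem_univ _⟩
    set c := ∑ j, (P ^ m) i1 j with hc
    have hc1 : c < 1 := hdef i1
    have hc0 : 0 ≤ c := Finset.sum_nonneg fun j _ => auxPowNonneg P hP m i1 j
    obtain ⟨n, hn⟩ := exists_pow_lt_of_lt_one
      (show (0:ℝ) < 1 / ((m:ℝ) * M' + 1) by positivity) hc1
    have hn1 : 1 ≤ n := by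
      rcases Nat.eq_zero_or_pos n with h | h
      · subst h
        rw [pow_zero] at hn
        have h2 : 1 / ((m:ℝ) * M' + 1) ≤ 1 := by
          rw [div_le_one (by positivity)]
          have : (0:ℝ) ≤ (m:ℝ) * M' := mul_nonneg (Nat.cast_nonneg m) hM'0
          linarith
        linarith
      · exact h
    have hentry : ∀ i j, (P ^ (m*n)) i j ≤ c ^ n := by
      intro i j
      refine le_trans (Finset.single_le_sum (f := fun t => (P ^ (m*n)) i t)
        (fun t _ => auxPowNonneg P hP (m*n) i t) (Finset.mem_univ j)) ?_
      exact auxGeom P hP hrowP1 c hc0 (fun i' => hi1 i' (Finset.mem_univ i')) n i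
    have habs : ∀ j, |u (m*n) j| ≤ (m:ℝ) * c ^ n * M' := by
      intro j
      calc |u (m*n) j| ≤ ∑ i, |(P ^ (m*n)) i j * Λ i| := Finset.abs_sum_le_sum_abs _ _
        _ = ∑ i, (P ^ (m*n)) i j * |Λ i| := Finset.sum_congr rfl fun i _ => by
            rw [abs_mul, abs_of_nonneg (auxPowNonneg P hP (m*n) i j)]
        _ ≤ ∑ i : Fin m, c ^ n * M' := Finset.sum_le_sum fun i _ =>
            mul_le_mul (hentry i j) (hi3 i (Finset.mem_univ i)) (abs_nonneg _)
              (pow_nonneg hc0 n)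
        _ = (m:ℝ) * c ^ n * M' := by
            rw [Finset.sum_const]
            simp [mul_assoc]
    have hkey : c ^ n * ((m:ℝ) * M' + 1) < 1 := by
      rw [← lt_div_iff₀ (show (0:ℝ) < (m:ℝ) * M' + 1 by positivity)]
      exact hn
    have hcpow : (0:ℝ) ≤ c ^ n := pow_nonneg hc0 n
    have hpos : ∀ j, 0 < Λ j := by
      intro j
      have e : (m*n - 1) + 1 = m*n := by
        have : 1 ≤ m * n := Nat.one_le_iff_ne_zero.mpr (by positivity)
        omega
      have h1 : u (m*n) j ≤ Λ j - 1 := by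
        have := hchain (m*n - 1) j
        rwa [e] at this
      have h2 : -((m:ℝ) * c ^ n * M') ≤ u (m*n) j := by
        have := habs j
        have := neg_abs_le (u (m*n) j)
        linarith
      have h3 : (m:ℝ) * c ^ n * M' < 1 := by nlinarith
      linarith
    refine ⟨Λ, hpos, fun j => ?_⟩
    rw [hfin Λ j]
    have := hlin j
    have h4 : Λ j - ∑ i, P i j * Λ i = 1 := by linarith
    rw [h4, mul_one]
    exact le_of_lt hs0
end

section
/- Let D(x) = (d_ij(x)) be a family of m×m matrices whose entries are continuous real-valued functions on a compact set E, such that for each x ∈ E the matrix D(x) has nonnegative diagonal entries, nonpositive off-diagonal entries, zero row sums, and is irreducible. Then there exists a continuous map Λ : E → R^m with Λ(x) > 0 componentwise and D(x)ᵀ Λ(x) = 0 for all x ∈ E. -/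
open Finset Matrix

/-- Any vector in the right kernel of an irreducible zero-row-sum Z-matrix is constant. -/
lemma kernel_const' {m : ℕ} (D : Matrix (Fin m) (Fin m) ℝ)
    (hoff : ∀ i j, i ≠ j → D i j ≤ 0) (hrow : ∀ i, ∑ j, D i j = 0)
    (hirr : ∀ I : Finset (Fin m), I.Nonempty → I ≠ Finset.univ → ∃ i ∈ I, ∃ j, j ∉ I ∧ D i j ≠ 0)
    (v : Fin m → ℝ) (hv : D.mulVec v = 0) (i j : Fin m) : v i = v j := by
  have hne : (Finset.univ : Finset (Fin m)).Nonempty := ⟨i, mem_univ i⟩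
  set M := Finset.univ.sup' hne v with hM
  set I : Finset (Fin m) := Finset.univ.filter (fun k => v k = M) with hI
  have hInonempty : I.Nonempty := by
    obtain ⟨a, _, ha⟩ := Finset.exists_mem_eq_sup' hne v
    exact ⟨a, by simp [hI, ha.symm, hM]⟩
  have hIuniv : I = Finset.univ := by
    by_contra hne2
    obtain ⟨a, haI, l, hlI, hDal⟩ := hirr I hInonempty hne2
    have hva : v a = M := by simpa [hI] using haI
    have hvl : v l ≠ M := by simpa [hI] using hlI
    have hla : l ≠ a := fun h => hlI (h ▸ haI)
    have h0 : ∑ k, D a k * (v k - M) = 0 := by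
      have h1 : ∑ k, D a k * v k = 0 := by
        have := congrFun hv a
        simpa [Matrix.mulVec, dotProduct] using this
      have h2 : ∑ k, D a k * M = 0 := by
        rw [← Finset.sum_mul, hrow a, zero_mul]
      calc ∑ k, D a k * (v k - M) = ∑ k, (D a k * v k - D a k * M) := by
            simp [mul_sub]
        _ = 0 := by rw [Finset.sum_sub_distrib, h1, h2, sub_zero]
    have hterm : ∀ k ∈ Finset.univ, 0 ≤ D a k * (v k - M) := by
      intro k _
      rcases eq_or_ne k a with rfl | hka
      · simp [hva]
      · have h1 := hoff a k (Ne.symm hka)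
        have h2 : v k - M ≤ 0 := sub_nonpos.mpr (Finset.le_sup' v (mem_univ k))
        nlinarith
    have := (Finset.sum_eq_zero_iff_of_nonneg hterm).mp h0 l (mem_univ l)
    rcases mul_eq_zero.mp this with h | h
    · exact hDal h
    · exact hvl (by linarith [sub_eq_zero.mp h])
  have hvi : v i = M := by
    have : i ∈ I := hIuniv ▸ mem_univ i
    simpa [hI] using this
  have hvj : v j = M := by
    have : j ∈ I := hIuniv ▸ mem_univ j
    simpa [hI] using this
  rw [hvi, hvj]

/-- The shifted principal submatrix is nonsingular for t ≥ 0. -/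
lemma shifted_nonsing {m : ℕ} (D : Matrix (Fin (m+1)) (Fin (m+1)) ℝ)
    (hdiag : ∀ i, 0 ≤ D i i)
    (hoff : ∀ i j, i ≠ j → D i j ≤ 0) (hrow : ∀ i, ∑ j, D i j = 0)
    (hirr : ∀ I : Finset (Fin (m+1)), I.Nonempty → I ≠ Finset.univ →
      ∃ i ∈ I, ∃ j, j ∉ I ∧ D i j ≠ 0)
    (k : Fin (m+1)) (t : ℝ) (ht : 0 ≤ t) (z : Fin m → ℝ)
    (hz : (D.submatrix k.succAbove k.succAbove + t • 1).mulVec z = 0) : z = 0 := by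
  by_contra hz0
  set A := D.submatrix k.succAbove k.succAbove with hA
  set w : Fin (m+1) → ℝ := k.insertNth 0 z with hw
  have hwk : w k = 0 := by simp [hw]
  have hws : ∀ j', w (k.succAbove j') = z j' := fun j' => by simp [hw]
  -- the key equation
  have key : ∀ i' : Fin m, (∑ j, D (k.succAbove i') j * w j) + t * w (k.succAbove i') = 0 := by
    intro i'
    have h1 : A.mulVec z i' + t * z i' = 0 := by
      have := congrFun hz i'
      simpa [Matrix.add_mulVec, Matrix.smul_mulVec, Matrix.one_mulVec] using this
    have h2 : A.mulVec z i' = ∑ j, D (k.succAbove i') j * w j := by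
      rw [Fin.sum_univ_succAbove (fun j => D (k.succAbove i') j * w j) k]
      simp [Matrix.mulVec, dotProduct, hA, hwk, hws]
    rw [← h2, hws]; exact h1
  -- max of |w|
  have hne : (Finset.univ : Finset (Fin (m+1))).Nonempty := ⟨k, mem_univ k⟩
  set M := Finset.univ.sup' hne (fun j => |w j|) with hM
  have hMle : ∀ j, |w j| ≤ M := fun j => Finset.le_sup' (fun j => |w j|) (mem_univ j)
  have hMpos : 0 < M := by
    obtain ⟨j', hj'⟩ : ∃ j', z j' ≠ 0 := by
      by_contra h
      push_neg at h
      exact hz0 (funext h)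
    calc 0 < |z j'| := abs_pos.mpr hj'
      _ = |w (k.succAbove j')| := by rw [hws]
      _ ≤ M := hMle _
  set I : Finset (Fin (m+1)) := Finset.univ.filter (fun j => |w j| = M) with hI
  have hInonempty : I.Nonempty := by
    obtain ⟨a, _, ha⟩ := Finset.exists_mem_eq_sup' hne (fun j => |w j|)
    exact ⟨a, by simp [hI, ha.symm, hM]⟩
  have hkI : k ∉ I := by
    simp only [hI, mem_filter, mem_univ, true_and]
    rw [hwk]; simp only [abs_zero]; exact (ne_of_lt hMpos)
  have hIuniv : I ≠ Finset.univ := fun h => hkI (h ▸ mem_univ k)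
  obtain ⟨a, haI, l, hlI, hDal⟩ := hirr I hInonempty hIuniv
  have hwa : |w a| = M := by simpa [hI] using haI
  have hwl : |w l| ≠ M := by simpa [hI] using hlI
  have hak : a ≠ k := fun h => hkI (h ▸ haI)
  have hla : l ≠ a := fun h => hlI (h ▸ haI)
  obtain ⟨a', ha'⟩ := Fin.exists_succAbove_eq hak
  -- the equation at a
  have keya : (D a a + t) * w a = ∑ j ∈ Finset.univ.erase a, (- D a j) * w j := by
    have := key a'
    rw [ha'] at this
    have hsplit : ∑ j, D a j * w j
        = D a a * w a + ∑ j ∈ Finset.univ.erase a, D a j * w j :=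
      (Finset.add_sum_erase _ _ (mem_univ a)).symm
    have : D a a * w a + ∑ j ∈ Finset.univ.erase a, D a j * w j + t * w a = 0 := by
      rw [← hsplit]; exact this
    have h2 : ∑ j ∈ Finset.univ.erase a, (- D a j) * w j
        = - ∑ j ∈ Finset.univ.erase a, D a j * w j := by
      simp [Finset.sum_neg_distrib]
    rw [h2]; ring_nf; linarith
  have hrowa : ∑ j ∈ Finset.univ.erase a, (- D a j) = D a a := by
    have := hrow a
    have h1 : D a a + ∑ j ∈ Finset.univ.erase a, D a j = 0 := by
      rw [Finset.add_sum_erase _ _ (mem_univ a)]; exact this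
    simp [Finset.sum_neg_distrib]; linarith
  -- the chain of inequalities
  have hS1 : |∑ j ∈ Finset.univ.erase a, (- D a j) * w j|
      ≤ ∑ j ∈ Finset.univ.erase a, (- D a j) * |w j| := by
    refine (Finset.abs_sum_le_sum_abs _ _).trans (le_of_eq ?_)
    refine Finset.sum_congr rfl fun j hj => ?_
    rw [abs_mul, abs_of_nonneg]
    exact neg_nonneg.mpr (hoff a j (Ne.symm (Finset.ne_of_mem_erase hj)))
  have hS2 : ∑ j ∈ Finset.univ.erase a, (- D a j) * |w j|
      ≤ ∑ j ∈ Finset.univ.erase a, (- D a j) * M := by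
    refine Finset.sum_le_sum fun j hj => ?_
    exact mul_le_mul_of_nonneg_left (hMle j)
      (neg_nonneg.mpr (hoff a j (Ne.symm (Finset.ne_of_mem_erase hj))))
  have hS2' : ∑ j ∈ Finset.univ.erase a, (- D a j) * M = D a a * M := by
    rw [← Finset.sum_mul, hrowa]
  have hLHS : |(D a a + t) * w a| = (D a a + t) * M := by
    rw [abs_mul, hwa, abs_of_nonneg (by linarith [hdiag a])]
  have hchain : (D a a + t) * M ≤ D a a * M := by
    rw [← hLHS, keya]
    exact hS1.trans (hS2.trans (le_of_eq hS2'))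
  have ht0 : t = 0 := by nlinarith
  -- equality case
  have heq : ∑ j ∈ Finset.univ.erase a, (- D a j) * |w j|
      = ∑ j ∈ Finset.univ.erase a, (- D a j) * M := by
    have h1 : D a a * M ≤ ∑ j ∈ Finset.univ.erase a, (- D a j) * |w j| := by
      calc D a a * M = (D a a + t) * M := by rw [ht0]; ring
        _ = |(D a a + t) * w a| := hLHS.symm
        _ = |∑ j ∈ Finset.univ.erase a, (- D a j) * w j| := by rw [keya]
        _ ≤ _ := hS1
    rw [hS2']; linarith
  have hterm : (- D a l) * |w l| = (- D a l) * M := by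
    have hle : ∀ j ∈ Finset.univ.erase a, (- D a j) * |w j| ≤ (- D a j) * M :=
      fun j hj => mul_le_mul_of_nonneg_left (hMle j)
        (neg_nonneg.mpr (hoff a j (Ne.symm (Finset.ne_of_mem_erase hj))))
    exact (Finset.sum_eq_sum_iff_of_le hle).mp heq l
      (Finset.mem_erase.mpr ⟨hla, mem_univ l⟩)
  have : |w l| = M := by
    have hDal' : - D a l ≠ 0 := neg_ne_zero.mpr hDal
    exact mul_left_cancel₀ hDal' hterm
  exact hwl this

/-- Determinant positivity of principal submatrices. -/
lemma det_submatrix_pos {m : ℕ} (D : Matrix (Fin (m+1)) (Fin (m+1)) ℝ)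
    (hdiag : ∀ i, 0 ≤ D i i)
    (hoff : ∀ i j, i ≠ j → D i j ≤ 0) (hrow : ∀ i, ∑ j, D i j = 0)
    (hirr : ∀ I : Finset (Fin (m+1)), I.Nonempty → I ≠ Finset.univ →
      ∃ i ∈ I, ∃ j, j ∉ I ∧ D i j ≠ 0)
    (k : Fin (m+1)) : 0 < (D.submatrix k.succAbove k.succAbove).det := by
  set A := D.submatrix k.succAbove k.succAbove with hA
  set f : ℝ → ℝ := fun t => (A + t • 1).det with hf
  have hnz : ∀ t, 0 ≤ t → f t ≠ 0 := by
    intro t ht h0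
    obtain ⟨v, hv0, hv⟩ := (Matrix.exists_mulVec_eq_zero_iff).mpr h0
    exact hv0 (shifted_nonsing D hdiag hoff hrow hirr k t ht v hv)
  have hfc : Continuous f := by
    apply Continuous.matrix_det
    exact continuous_const.add (continuous_id.smul continuous_const)
  -- find T ≥ 0 with f T > 0
  have hg : Continuous fun s : ℝ => ((1 : Matrix (Fin m) (Fin m) ℝ) + s • A).det := by
    apply Continuous.matrix_det
    exact continuous_const.add (continuous_id.smul continuous_const)
  have hg0 : ((1 : Matrix (Fin m) (Fin m) ℝ) + (0:ℝ) • A).det = 1 := by simp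
  have hev : ∀ᶠ s in nhds (0:ℝ), 0 < ((1 : Matrix (Fin m) (Fin m) ℝ) + s • A).det := by
    have := hg.continuousAt (x := (0:ℝ))
    apply this.eventually
    simp only [zero_smul, add_zero, Matrix.det_one]
    exact eventually_gt_nhds one_pos
  obtain ⟨δ, hδ, hball⟩ := Metric.eventually_nhds_iff.mp hev
  set T : ℝ := max 1 (2/δ) with hT
  have hT1 : (1:ℝ) ≤ T := le_max_left _ _
  have hTpos : 0 < T := lt_of_lt_of_le one_pos hT1
  have hsmall : dist T⁻¹ 0 < δ := by
    rw [Real.dist_eq, sub_zero, abs_of_pos (inv_pos.mpr hTpos)]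
    have h2 : 2/δ ≤ T := le_max_right _ _
    have key : 2 ≤ δ * T := by
      have := mul_le_mul_of_nonneg_left h2 (le_of_lt hδ)
      have h3 : δ * (2/δ) = 2 := by field_simp
      linarith
    have : T⁻¹ ≤ δ/2 := by
      rw [inv_eq_one_div, div_le_div_iff₀ hTpos two_pos]
      linarith
    linarith [half_lt_self hδ]
  have hfT : 0 < f T := by
    have h1 : 0 < ((1 : Matrix (Fin m) (Fin m) ℝ) + T⁻¹ • A).det := hball hsmall
    have h2 : A + T • 1 = T • ((1 : Matrix (Fin m) (Fin m) ℝ) + T⁻¹ • A) := by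
      rw [smul_add, smul_smul, mul_inv_cancel₀ (ne_of_gt hTpos), one_smul]
      abel
    rw [hf]
    simp only
    rw [h2, Matrix.det_smul]
    positivity
  -- IVT
  have hf0 : f 0 ≠ 0 := hnz 0 le_rfl
  have hf0pos : 0 < f 0 := by
    rcases lt_or_gt_of_ne hf0 with h | h
    · exfalso
      have hsub : Set.Icc (f 0) (f T) ⊆ f '' Set.Icc 0 T :=
        intermediate_value_Icc (le_of_lt hTpos) (hfc.continuousOn)
      obtain ⟨t, ht, hft⟩ := hsub ⟨le_of_lt h, le_of_lt hfT⟩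
      exact hnz t ht.1 hft
    · exact h
  have : f 0 = A.det := by simp [hf]
  linarith [this ▸ hf0pos]

/-- For a continuous family `D(x)` of irreducible matrices with nonnegative diagonal,
nonpositive off-diagonal entries and zero row sums on a compact space `E`, there is a
continuous map `Λ : E → ℝ^m` with `Λ(x) > 0` and `D(x)ᵀ Λ(x) = 0` for all `x`. -/
theorem exists_continuous_positive_left_kernel {m : ℕ}
    (E : Type*) [TopologicalSpace E] [CompactSpace E]
    (D : E → Matrix (Fin m) (Fin m) ℝ)
    (hcont : ∀ i j, Continuous fun x => D x i j)
    (hdiag : ∀ x i, 0 ≤ D x i i)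
    (hoff : ∀ x i j, i ≠ j → D x i j ≤ 0)
    (hrow : ∀ x i, ∑ j, D x i j = 0)
    (hirr : ∀ x, MatIrreducible (D x)) :
    ∃ Λ : E → Fin m → ℝ, (∀ i, Continuous fun x => Λ x i) ∧
      ∀ x, (∀ i, 0 < Λ x i) ∧ (D x).transpose.mulVec (Λ x) = 0 := by
  match m with
  | 0 =>
    refine ⟨fun _ _ => 1, fun i => i.elim0, fun x => ⟨fun i => i.elim0, funext fun i => i.elim0⟩⟩
  | Nat.succ n =>
    refine ⟨fun x k => (D x).adjugate k k, ?_, ?_⟩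
    · intro k
      exact ((continuous_matrix fun i j => hcont i j).matrix_adjugate).matrix_elem k k
    · intro x
      have hdet0 : (D x).det = 0 := by
        rw [← Matrix.exists_mulVec_eq_zero_iff]
        refine ⟨fun _ => 1, ?_, ?_⟩
        · intro h
          have := congrFun h 0
          simp at this
        · funext i
          simpa [Matrix.mulVec, dotProduct] using hrow x i
      -- column constancy of the adjugate
      have hconstcol : ∀ c i : Fin (n+1), (D x).adjugate i c = (D x).adjugate c c := by
        intro c i
        have hker : (D x).mulVec (fun i => (D x).adjugate i c) = 0 := by
          funext i
          have := congrFun (congrFun (Matrix.mul_adjugate (D x)) i) c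
          rw [hdet0] at this
          simpa [Matrix.mulVec, dotProduct, Matrix.mul_apply] using this
        exact kernel_const' (D x) (hoff x) (hrow x) (hirr x) _ hker i c
      constructor
      · intro k
        have hpos := det_submatrix_pos (D x) (hdiag x) (hoff x) (hrow x) (hirr x) k
        show 0 < (D x).adjugate k k
        rw [Matrix.adjugate_fin_succ_eq_det_submatrix (D x) k k]
        have heven : (-1 : ℝ) ^ ((k : ℕ) + (k : ℕ)) = 1 := Even.neg_one_pow ⟨k, rfl⟩
        rw [heven, one_mul]
        exact hpos
      · funext j
        show (D x).transpose.mulVec (fun k => (D x).adjugate k k) j = 0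
        have h1 : ∑ k, (D x).adjugate j k * D x k j = 0 := by
          have := congrFun (congrFun (Matrix.adjugate_mul (D x)) j) j
          rw [hdet0] at this
          simpa [Matrix.mul_apply] using this
        have h2 : (D x).transpose.mulVec (fun k => (D x).adjugate k k) j
            = ∑ k, (D x).adjugate k k * D x k j := by
          simp [Matrix.mulVec, dotProduct, Matrix.transpose_apply, mul_comm]
        rw [h2]
        rw [← h1]
        refine Finset.sum_congr rfl fun k _ => ?_
        rw [hconstcol k j]
end

section
/- Let D be an m×m real irreducible matrix with d_ii ≥ 0, d_ij ≤ 0 for i ≠ j and zero row sums. Then for every w_0 ∈ R^m, the solution w(t) = exp(−tD) w_0 of the linear ODE w'(t) = −D w(t) converges as t → +∞; moreover the convergence is exponential: there exist a matrix A and constants C, r > 0 such that ‖exp(−tD) − A‖ ≤ C e^{−rt} for all t ≥ 0. -/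
open NormedSpace

namespace ExpNegDAux

variable {m : ℕ}

lemma expHasSum (X : Matrix (Fin m) (Fin m) ℝ) :
    HasSum (fun n : ℕ => ((n.factorial : ℝ)⁻¹) • X ^ n) (exp X) := by
  letI : SeminormedRing (Matrix (Fin m) (Fin m) ℝ) := Matrix.linftyOpSemiNormedRing
  letI : NormedRing (Matrix (Fin m) (Fin m) ℝ) := Matrix.linftyOpNormedRing
  letI : NormedAlgebra ℝ (Matrix (Fin m) (Fin m) ℝ) := Matrix.linftyOpNormedAlgebra
  exact exp_series_hasSum_exp' X

lemma expEntryHasSum (X : Matrix (Fin m) (Fin m) ℝ) (i j : Fin m) :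
    HasSum (fun n : ℕ => ((n.factorial : ℝ)⁻¹) * (X ^ n) i j) ((exp X) i j) := by
  have h := expHasSum X
  simpa using (Pi.hasSum.mp (Pi.hasSum.mp h i) j)

lemma pow_entry_nonneg {X : Matrix (Fin m) (Fin m) ℝ} (hX : ∀ i j, 0 ≤ X i j) :
    ∀ (n : ℕ) (i j : Fin m), 0 ≤ (X ^ n) i j := by
  intro n
  induction n with
  | zero => intro i j; by_cases h : i = j <;> simp [pow_zero, Matrix.one_apply, h]
  | succ n ih =>
      intro i j
      rw [pow_succ, Matrix.mul_apply]
      exact Finset.sum_nonneg fun k _ => mul_nonneg (ih i k) (hX k j)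

lemma exp_entry_nonneg {X : Matrix (Fin m) (Fin m) ℝ} (hX : ∀ i j, 0 ≤ X i j) (i j : Fin m) :
    0 ≤ (exp X) i j :=
  (expEntryHasSum X i j).nonneg fun n =>
    mul_nonneg (by positivity) (pow_entry_nonneg hX n i j)

lemma exp_entry_lb {X : Matrix (Fin m) (Fin m) ℝ} (hX : ∀ i j, 0 ≤ X i j) (k : ℕ) (i j : Fin m) :
    ((k.factorial : ℝ)⁻¹) * (X ^ k) i j ≤ (exp X) i j :=
  le_hasSum (expEntryHasSum X i j) k fun n _ =>
    mul_nonneg (by positivity) (pow_entry_nonneg hX n i j)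

lemma exp_row_sum {X : Matrix (Fin m) (Fin m) ℝ} (hX : ∀ i, ∑ j, X i j = 0) (i : Fin m) :
    ∑ j, (exp X) i j = 1 := by
  have hpow : ∀ n : ℕ, 0 < n → ∀ i, ∑ j, (X ^ n) i j = 0 := by
    intro n hn
    induction n with
    | zero => omega
    | succ n ih =>
        intro i
        rcases Nat.eq_zero_or_pos n with h0 | h0
        · simpa [h0] using hX i
        · simp only [pow_succ', Matrix.mul_apply]
          rw [Finset.sum_comm]
          simp only [← Finset.mul_sum]
          rw [Finset.sum_congr rfl fun k _ => by rw [ih h0 k, mul_zero]]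
          simp
  have h1 : HasSum (fun n : ℕ => ∑ j, ((n.factorial : ℝ)⁻¹) * (X ^ n) i j)
      (∑ j, (exp X) i j) := hasSum_sum fun j _ => expEntryHasSum X i j
  have h2 : HasSum (fun n : ℕ => ∑ j, ((n.factorial : ℝ)⁻¹) * (X ^ n) i j) 1 := by
    have : (fun n : ℕ => ∑ j, ((n.factorial : ℝ)⁻¹) * (X ^ n) i j)
        = fun n => if n = 0 then (1:ℝ) else 0 := by
      funext n
      rcases Nat.eq_zero_or_pos n with h0 | h0
      · subst h0
        simp [Matrix.one_apply, Finset.sum_ite_eq]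
      · rw [if_neg h0.ne', ← Finset.mul_sum, hpow n h0 i, mul_zero]
    rw [this]
    simpa using hasSum_ite_eq (0:ℕ) (1:ℝ)
  exact h1.unique h2

lemma exp_smul_one (c : ℝ) :
    exp (c • (1 : Matrix (Fin m) (Fin m) ℝ)) = Real.exp c • (1 : Matrix (Fin m) (Fin m) ℝ) := by
  letI : SeminormedRing (Matrix (Fin m) (Fin m) ℝ) := Matrix.linftyOpSemiNormedRing
  letI : NormedRing (Matrix (Fin m) (Fin m) ℝ) := Matrix.linftyOpNormedRing
  letI : NormedAlgebra ℝ (Matrix (Fin m) (Fin m) ℝ) := Matrix.linftyOpNormedAlgebra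
  have h := algebraMap_exp_comm (𝕂 := ℝ) (𝔸 := Matrix (Fin m) (Fin m) ℝ) c
  rw [Algebra.algebraMap_eq_smul_one, Algebra.algebraMap_eq_smul_one] at h
  rw [Real.exp_eq_exp_ℝ]
  exact h.symm

lemma exp_decomp (D : Matrix (Fin m) (Fin m) ℝ) (c t : ℝ) :
    exp ((-t) • D) =
      Real.exp (-(t * c)) • exp (t • (c • (1 : Matrix (Fin m) (Fin m) ℝ) - D)) := by
  have hsplit : (-t) • D = t • (c • (1 : Matrix (Fin m) (Fin m) ℝ) - D)
      + (-(t * c)) • (1 : Matrix (Fin m) (Fin m) ℝ) := by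
    rw [smul_sub, smul_smul]
    module
  rw [hsplit, Matrix.exp_add_of_commute]
  · rw [exp_smul_one, Matrix.mul_smul, mul_one]
  · exact (Commute.one_right _).smul_right _

lemma reach {B : Matrix (Fin m) (Fin m) ℝ} (hnn : ∀ i j, 0 ≤ B i j)
    (hedge : ∀ I : Finset (Fin m), I.Nonempty → I ≠ Finset.univ →
      ∃ a ∈ I, ∃ b, b ∉ I ∧ 0 < B a b) (i j : Fin m) :
    ∃ k, 0 < (B ^ k) i j := by
  classical
  set I : Finset (Fin m) := Finset.univ.filter (fun j => ∃ k, 0 < (B ^ k) i j) with hI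
  have hiI : i ∈ I := by
    simp only [hI, Finset.mem_filter, Finset.mem_univ, true_and]
    exact ⟨0, by simp [Matrix.one_apply]⟩
  have hIuniv : I = Finset.univ := by
    by_contra hne
    obtain ⟨a, haI, b, hbI, hab⟩ := hedge I ⟨i, hiI⟩ hne
    obtain ⟨k, hk⟩ := (Finset.mem_filter.mp haI).2
    apply hbI
    simp only [hI, Finset.mem_filter, Finset.mem_univ, true_and]
    refine ⟨k + 1, ?_⟩
    have hle : (B ^ k) i a * B a b ≤ (B ^ (k + 1)) i b := by
      rw [pow_succ, Matrix.mul_apply]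
      exact Finset.single_le_sum
        (f := fun l => (B ^ k) i l * B l b)
        (fun l _ => mul_nonneg (pow_entry_nonneg hnn k i l) (hnn l b))
        (Finset.mem_univ a)
    exact lt_of_lt_of_le (mul_pos hk hab) hle
  have : j ∈ I := hIuniv ▸ Finset.mem_univ j
  exact (Finset.mem_filter.mp this).2

lemma B_edge (D : Matrix (Fin m) (Fin m) ℝ) (c : ℝ)
    (hoff : ∀ i j, i ≠ j → D i j ≤ 0) (hirr : MatIrreducible D) :
    ∀ I : Finset (Fin m), I.Nonempty → I ≠ Finset.univ →
      ∃ a ∈ I, ∃ b, b ∉ I ∧ 0 < (c • (1 : Matrix (Fin m) (Fin m) ℝ) - D) a b := by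
  intro I hne hnu
  obtain ⟨a, haI, b, hbI, hab⟩ := hirr I hne hnu
  refine ⟨a, haI, b, hbI, ?_⟩
  have hab' : a ≠ b := fun h => hbI (h ▸ haI)
  have : (c • (1 : Matrix (Fin m) (Fin m) ℝ) - D) a b = -D a b := by
    simp [Matrix.one_apply, hab']
  rw [this]
  exact neg_pos.mpr (lt_of_le_of_ne (hoff a b hab') hab)

lemma avg_bounds (ne : (Finset.univ : Finset (Fin m)).Nonempty)
    {Q : Matrix (Fin m) (Fin m) ℝ} (hq : ∀ i j, 0 ≤ Q i j)
    (hr : ∀ i, ∑ j, Q i j = 1) (v : Fin m → ℝ) (i : Fin m) :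
    Finset.univ.inf' ne v ≤ Q.mulVec v i ∧ Q.mulVec v i ≤ Finset.univ.sup' ne v := by
  have hmv : Q.mulVec v i = ∑ j, Q i j * v j := by
    simp [Matrix.mulVec, dotProduct]
  constructor
  · rw [hmv]
    calc Finset.univ.inf' ne v = ∑ j, Q i j * Finset.univ.inf' ne v := by
          rw [← Finset.sum_mul, hr i, one_mul]
      _ ≤ ∑ j, Q i j * v j :=
          Finset.sum_le_sum fun j _ => mul_le_mul_of_nonneg_left
            (Finset.inf'_le v (Finset.mem_univ j)) (hq i j)
  · rw [hmv]
    calc ∑ j, Q i j * v j ≤ ∑ j, Q i j * Finset.univ.sup' ne v :=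
          Finset.sum_le_sum fun j _ => mul_le_mul_of_nonneg_left
            (Finset.le_sup' v (Finset.mem_univ j)) (hq i j)
      _ = Finset.univ.sup' ne v := by rw [← Finset.sum_mul, hr i, one_mul]

lemma contraction (ne : (Finset.univ : Finset (Fin m)).Nonempty)
    {Q : Matrix (Fin m) (Fin m) ℝ} {δ : ℝ}
    (hq : ∀ i j, δ ≤ Q i j) (hr : ∀ i, ∑ j, Q i j = 1) (v : Fin m → ℝ) :
    Finset.univ.sup' ne (Q.mulVec v) - Finset.univ.inf' ne (Q.mulVec v) ≤
      (1 - m * δ) * (Finset.univ.sup' ne v - Finset.univ.inf' ne v) := by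
  set M := Finset.univ.sup' ne v with hM
  set μ := Finset.univ.inf' ne v with hμ
  have key : ∀ i, Q.mulVec v i ≤ (1 - m * δ) * M + δ * ∑ j, v j ∧
      (1 - m * δ) * μ + δ * ∑ j, v j ≤ Q.mulVec v i := by
    intro i
    have hmv : Q.mulVec v i = ∑ j, (Q i j - δ) * v j + δ * ∑ j, v j := by
      simp [Matrix.mulVec, dotProduct, sub_mul, Finset.sum_sub_distrib,
        Finset.mul_sum]
    have hsum : ∑ j, (Q i j - δ) = 1 - m * δ := by
      rw [Finset.sum_sub_distrib, hr i]
      simp [Finset.card_univ]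
    constructor
    · rw [hmv]
      have : ∑ j, (Q i j - δ) * v j ≤ ∑ j, (Q i j - δ) * M :=
        Finset.sum_le_sum fun j _ => mul_le_mul_of_nonneg_left
          (Finset.le_sup' v (Finset.mem_univ j)) (sub_nonneg.mpr (hq i j))
      calc ∑ j, (Q i j - δ) * v j + δ * ∑ j, v j
          ≤ ∑ j, (Q i j - δ) * M + δ * ∑ j, v j := by linarith
        _ = (1 - m * δ) * M + δ * ∑ j, v j := by rw [← Finset.sum_mul, hsum]
    · rw [hmv]
      have : ∑ j, (Q i j - δ) * μ ≤ ∑ j, (Q i j - δ) * v j :=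
        Finset.sum_le_sum fun j _ => mul_le_mul_of_nonneg_left
          (Finset.inf'_le v (Finset.mem_univ j)) (sub_nonneg.mpr (hq i j))
      have h2 : ∑ j, (Q i j - δ) * μ = (1 - m * δ) * μ := by rw [← Finset.sum_mul, hsum]
      linarith
  have h1 : Finset.univ.sup' ne (Q.mulVec v) ≤ (1 - m * δ) * M + δ * ∑ j, v j :=
    Finset.sup'_le ne _ fun i _ => (key i).1
  have h2 : (1 - m * δ) * μ + δ * ∑ j, v j ≤ Finset.univ.inf' ne (Q.mulVec v) :=
    Finset.le_inf' ne _ fun i _ => (key i).2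
  have : (1 - m * δ) * (M - μ) = ((1 - m * δ) * M + δ * ∑ j, v j)
      - ((1 - m * δ) * μ + δ * ∑ j, v j) := by ring
  linarith

end ExpNegDAux

open ExpNegDAux in
/-- For an irreducible matrix `D` with nonnegative diagonal, nonpositive off-diagonal
entries and zero row sums, `exp(-tD)` converges exponentially fast (entrywise) to some
matrix `A` as `t → ∞`; in particular every solution `w(t) = exp(-tD) w₀` of
`w' = -Dw` converges. -/
theorem expNegD_tendsto_of_irreducible {m : ℕ}
    (D : Matrix (Fin m) (Fin m) ℝ)
    (hdiag : ∀ i, 0 ≤ D i i)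
    (hoff : ∀ i j, i ≠ j → D i j ≤ 0)
    (hrow : ∀ i, ∑ j, D i j = 0)
    (hirr : MatIrreducible D) :
    ∃ (A : Matrix (Fin m) (Fin m) ℝ) (C r : ℝ), 0 < C ∧ 0 < r ∧
      (∀ t : ℝ, 0 ≤ t → ∀ i j,
        |(exp ((-t) • D)) i j - A i j| ≤ C * Real.exp (-r * t)) ∧
      (∀ w₀ : Fin m → ℝ,
        Filter.Tendsto (fun t : ℝ => (exp ((-t) • D)).mulVec w₀)
          Filter.atTop (nhds (A.mulVec w₀))) := by
  rcases Nat.eq_zero_or_pos m with hm | hm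
  · subst hm
    refine ⟨0, 1, 1, one_pos, one_pos, fun t ht i j => i.elim0, fun w₀ => ?_⟩
    have h : ∀ t : ℝ, (exp ((-t) • D)).mulVec w₀ = (0 : Matrix (Fin 0) (Fin 0) ℝ).mulVec w₀ :=
      fun t => Subsingleton.elim _ _
    simp only [h]
    exact tendsto_const_nhds
  -- now m ≥ 1
  have ne : (Finset.univ : Finset (Fin m)).Nonempty := ⟨⟨0, hm⟩, Finset.mem_univ _⟩
  set c : ℝ := 1 + ∑ i, D i i with hc_def
  have hc : ∀ i, D i i < c := by
    intro i
    have h1 : D i i ≤ ∑ k, D k k :=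
      Finset.single_le_sum (f := fun k => D k k) (fun k _ => hdiag k) (Finset.mem_univ i)
    simp only [hc_def]; linarith
  set B : Matrix (Fin m) (Fin m) ℝ := c • (1 : Matrix (Fin m) (Fin m) ℝ) - D with hB_def
  have hBnn : ∀ i j, 0 ≤ B i j := by
    intro i j
    by_cases h : i = j
    · subst h
      have : B i i = c - D i i := by simp [hB_def, Matrix.one_apply]
      rw [this]; linarith [hc i]
    · have : B i j = -D i j := by simp [hB_def, Matrix.one_apply, h]
      rw [this]; exact neg_nonneg.mpr (hoff i j h)
  -- basic facts about P t := exp ((-t) • D)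
  have hPnn : ∀ t : ℝ, 0 ≤ t → ∀ i j, 0 ≤ (exp ((-t) • D)) i j := by
    intro t ht i j
    rw [exp_decomp D c t, ← hB_def]
    have h1 : ∀ i j, 0 ≤ (t • B) i j := fun i j => by
      simpa [Matrix.smul_apply, smul_eq_mul] using mul_nonneg ht (hBnn i j)
    have := exp_entry_nonneg h1 i j
    simpa [Matrix.smul_apply, smul_eq_mul] using
      mul_nonneg (Real.exp_nonneg _) this
  have hProw : ∀ t : ℝ, ∀ i, ∑ j, (exp ((-t) • D)) i j = 1 := by
    intro t i
    apply exp_row_sum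
    intro k
    have : ∀ j, ((-t) • D) k j = -t * D k j := fun j => rfl
    simp only [this, ← Finset.mul_sum, hrow k, mul_zero]
  have hPadd : ∀ s t : ℝ, exp ((-(s + t)) • D) = exp ((-s) • D) * exp ((-t) • D) := by
    intro s t
    have h1 : (-(s + t)) • D = (-s) • D + (-t) • D := by module
    rw [h1, Matrix.exp_add_of_commute]
    exact ((Commute.refl D).smul_left (-s)).smul_right (-t)
  have hPle1 : ∀ t : ℝ, 0 ≤ t → ∀ i j, (exp ((-t) • D)) i j ≤ 1 := by
    intro t ht i j
    calc (exp ((-t) • D)) i j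
        ≤ ∑ k, (exp ((-t) • D)) i k :=
          Finset.single_le_sum (f := fun k => (exp ((-t) • D)) i k)
            (fun k _ => hPnn t ht i k) (Finset.mem_univ j)
      _ = 1 := hProw t i
  -- positivity of P 1
  have hpos1 : ∀ i j, 0 < (exp ((-(1:ℝ)) • D)) i j := by
    intro i j
    rw [exp_decomp D c 1, ← hB_def]
    obtain ⟨k, hk⟩ := reach hBnn (B_edge D c hoff hirr) i j
    have hBk : ((k.factorial : ℝ)⁻¹) * (B ^ k) i j ≤ (exp ((1:ℝ) • B)) i j := by
      simpa [one_smul] using exp_entry_lb hBnn k i j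
    have h1 : 0 < (exp ((1:ℝ) • B)) i j :=
      lt_of_lt_of_le (mul_pos (by positivity) hk) hBk
    simpa [Matrix.smul_apply, smul_eq_mul] using mul_pos (Real.exp_pos _) h1
  -- the minimal entry δ
  set δ : ℝ := Finset.univ.inf' ne (fun i => Finset.univ.inf' ne
    (fun j => (exp ((-(1:ℝ)) • D)) i j)) with hδ_def
  have hδpos : 0 < δ := by
    rw [hδ_def, Finset.lt_inf'_iff]
    intro i _
    rw [Finset.lt_inf'_iff]
    intro j _
    exact hpos1 i j
  have hδle : ∀ i j, δ ≤ (exp ((-(1:ℝ)) • D)) i j := by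
    intro i j
    calc δ ≤ Finset.univ.inf' ne (fun j => (exp ((-(1:ℝ)) • D)) i j) :=
        Finset.inf'_le _ (Finset.mem_univ i)
      _ ≤ (exp ((-(1:ℝ)) • D)) i j := Finset.inf'_le _ (Finset.mem_univ j)
  set θ : ℝ := max (1 - m * δ) (1/2) with hθ_def
  have hθhalf : (1/2 : ℝ) ≤ θ := le_max_right _ _
  have hθpos : 0 < θ := lt_of_lt_of_le (by norm_num) hθhalf
  have hθlt1 : θ < 1 := by
    rw [hθ_def]
    apply max_lt _ (by norm_num)
    have hmδ : 0 < (m : ℝ) * δ := mul_pos (by exact_mod_cast hm) hδpos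
    linarith
  -- oscillation of columns
  have hosc_nonneg : ∀ v : Fin m → ℝ, 0 ≤ Finset.univ.sup' ne v - Finset.univ.inf' ne v := by
    intro v
    obtain ⟨i, hi⟩ := ne
    have h1 := Finset.inf'_le v hi
    have h2 := Finset.le_sup' v hi
    linarith
  -- column of a product
  have hcol : ∀ s t : ℝ, ∀ j, (fun i => (exp ((-(s + t)) • D)) i j)
      = (exp ((-s) • D)).mulVec (fun i => (exp ((-t) • D)) i j) := by
    intro s t j
    funext i
    rw [hPadd s t]
    simp [Matrix.mul_apply, Matrix.mulVec, dotProduct]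
  -- oscillation decay at integer times
  have hosc_le : ∀ v : Fin m → ℝ,
      Finset.univ.sup' ne ((exp ((-(1:ℝ)) • D)).mulVec v)
        - Finset.univ.inf' ne ((exp ((-(1:ℝ)) • D)).mulVec v)
      ≤ θ * (Finset.univ.sup' ne v - Finset.univ.inf' ne v) := by
    intro v
    calc Finset.univ.sup' ne ((exp ((-(1:ℝ)) • D)).mulVec v)
          - Finset.univ.inf' ne ((exp ((-(1:ℝ)) • D)).mulVec v)
        ≤ (1 - m * δ) * (Finset.univ.sup' ne v - Finset.univ.inf' ne v) :=
          contraction ne hδle (hProw 1) v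
      _ ≤ θ * (Finset.univ.sup' ne v - Finset.univ.inf' ne v) :=
          mul_le_mul_of_nonneg_right (le_max_left _ _) (hosc_nonneg v)
  have hosc_decay : ∀ (n : ℕ) (j : Fin m),
      Finset.univ.sup' ne (fun i => (exp ((-(n:ℝ)) • D)) i j)
        - Finset.univ.inf' ne (fun i => (exp ((-(n:ℝ)) • D)) i j) ≤ θ ^ n := by
    intro n
    induction n with
    | zero =>
        intro j
        simp only [Nat.cast_zero, pow_zero]
        have h1 : Finset.univ.sup' ne (fun i => (exp ((-(0:ℝ)) • D)) i j) ≤ 1 :=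
          Finset.sup'_le ne _ fun i _ => hPle1 0 le_rfl i j
        have h2 : (0:ℝ) ≤ Finset.univ.inf' ne (fun i => (exp ((-(0:ℝ)) • D)) i j) :=
          Finset.le_inf' ne _ fun i _ => hPnn 0 le_rfl i j
        linarith
    | succ n ih =>
        intro j
        have hcast : ((n+1 : ℕ) : ℝ) = 1 + (n : ℝ) := by push_cast; ring
        have hcoleq : (fun i => (exp ((-((n+1:ℕ):ℝ)) • D)) i j)
            = (exp ((-(1:ℝ)) • D)).mulVec (fun i => (exp ((-(n:ℝ)) • D)) i j) := by
          rw [hcast]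
          exact hcol 1 n j
        rw [hcoleq]
        calc Finset.univ.sup' ne ((exp ((-(1:ℝ)) • D)).mulVec
              (fun i => (exp ((-(n:ℝ)) • D)) i j))
            - Finset.univ.inf' ne ((exp ((-(1:ℝ)) • D)).mulVec
              (fun i => (exp ((-(n:ℝ)) • D)) i j))
            ≤ θ * (Finset.univ.sup' ne (fun i => (exp ((-(n:ℝ)) • D)) i j)
              - Finset.univ.inf' ne (fun i => (exp ((-(n:ℝ)) • D)) i j)) := hosc_le _
          _ ≤ θ * θ ^ n := mul_le_mul_of_nonneg_left (ih j) (le_of_lt hθpos)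
          _ = θ ^ (n+1) := by ring
  -- interval membership: for t ≥ 0 and s ≥ 0, entries of P (s+t) lie between
  -- the min and max of the column of P t
  have hmem : ∀ t : ℝ, ∀ s : ℝ, 0 ≤ s → ∀ (j i : Fin m),
      Finset.univ.inf' ne (fun i => (exp ((-t) • D)) i j)
        ≤ (exp ((-(s + t)) • D)) i j ∧
      (exp ((-(s + t)) • D)) i j
        ≤ Finset.univ.sup' ne (fun i => (exp ((-t) • D)) i j) := by
    intro t s hs j i
    have h := avg_bounds ne (hPnn s hs) (hProw s)
      (fun i => (exp ((-t) • D)) i j) i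
    have heq : (exp ((-(s + t)) • D)) i j
        = (exp ((-s) • D)).mulVec (fun i => (exp ((-t) • D)) i j) i :=
      congrFun (hcol s t j) i
    rw [heq]
    exact h
  -- Cauchy sequence of entries at integer times
  have hstep : ∀ (i j : Fin m) (n : ℕ),
      dist ((exp ((-(n:ℝ)) • D)) i j) ((exp ((-((n+1:ℕ):ℝ)) • D)) i j) ≤ 1 * θ ^ n := by
    intro i j n
    have h0 : (exp ((-((0:ℝ) + (n:ℝ))) • D)) i j = (exp ((-(n:ℝ)) • D)) i j := by
      rw [zero_add]
    have hmem0 := hmem (n:ℝ) 0 le_rfl j i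
    rw [h0] at hmem0
    have h1 : (exp ((-((1:ℝ) + (n:ℝ))) • D)) i j = (exp ((-((n+1:ℕ):ℝ)) • D)) i j := by
      have hnum : (-((1:ℝ) + (n:ℝ))) = (-((n+1:ℕ):ℝ)) := by push_cast; ring
      rw [hnum]
    have hmem1 := hmem (n:ℝ) 1 zero_le_one j i
    rw [h1] at hmem1
    have hosc := hosc_decay n j
    rw [Real.dist_eq, one_mul, abs_sub_le_iff]
    constructor <;> linarith [hmem0.1, hmem0.2, hmem1.1, hmem1.2]
  have hcauchy : ∀ i j, CauchySeq (fun n : ℕ => (exp ((-(n:ℝ)) • D)) i j) := by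
    intro i j
    exact cauchySeq_of_le_geometric θ 1 hθlt1 (fun n => hstep i j n)
  have hlim : ∀ i j, ∃ a, Filter.Tendsto (fun n : ℕ => (exp ((-(n:ℝ)) • D)) i j)
      Filter.atTop (nhds a) := fun i j => cauchySeq_tendsto_of_complete (hcauchy i j)
  choose A hA using hlim
  -- the limit also lies in the column intervals
  have hAmem : ∀ (n : ℕ) (j i : Fin m),
      Finset.univ.inf' ne (fun i => (exp ((-(n:ℝ)) • D)) i j) ≤ A i j ∧
      A i j ≤ Finset.univ.sup' ne (fun i => (exp ((-(n:ℝ)) • D)) i j) := by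
    intro n j i
    have hev : ∀ k : ℕ, n ≤ k →
        Finset.univ.inf' ne (fun i => (exp ((-(n:ℝ)) • D)) i j)
          ≤ (exp ((-(k:ℝ)) • D)) i j ∧
        (exp ((-(k:ℝ)) • D)) i j
          ≤ Finset.univ.sup' ne (fun i => (exp ((-(n:ℝ)) • D)) i j) := by
      intro k hk
      have hs : (0:ℝ) ≤ (k:ℝ) - (n:ℝ) := by
        have := (Nat.cast_le (α := ℝ)).mpr hk; linarith
      have h := hmem (n:ℝ) ((k:ℝ) - (n:ℝ)) hs j i
      have heq : (k:ℝ) - (n:ℝ) + (n:ℝ) = (k:ℝ) := by ring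
      rw [heq] at h
      exact h
    constructor
    · exact ge_of_tendsto (hA i j) (Filter.eventually_atTop.mpr ⟨n, fun k hk => (hev k hk).1⟩)
    · exact le_of_tendsto (hA i j) (Filter.eventually_atTop.mpr ⟨n, fun k hk => (hev k hk).2⟩)
  -- entrywise bound
  have hboundθ : ∀ t : ℝ, 0 ≤ t → ∀ i j,
      |(exp ((-t) • D)) i j - A i j| ≤ θ ^ (⌊t⌋₊) := by
    intro t ht i j
    set n : ℕ := ⌊t⌋₊ with hn_def
    have hn1 : (n:ℝ) ≤ t := Nat.floor_le ht
    have hPt := hmem (n:ℝ) (t - (n:ℝ)) (by linarith) j i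
    have heq : t - (n:ℝ) + (n:ℝ) = t := by ring
    rw [heq] at hPt
    have hAm := hAmem n j i
    have hosc := hosc_decay n j
    rw [abs_sub_le_iff]
    constructor <;> linarith [hPt.1, hPt.2, hAm.1, hAm.2]
  have hL : Real.log θ < 0 := Real.log_neg hθpos hθlt1
  have hinv2 : θ⁻¹ ≤ 2 := by
    have h1 : θ⁻¹ * θ = 1 := inv_mul_cancel₀ (ne_of_gt hθpos)
    have h2 : 0 < θ⁻¹ := inv_pos.mpr hθpos
    nlinarith
  have hgeom : ∀ t : ℝ, 0 ≤ t → (θ : ℝ) ^ (⌊t⌋₊) ≤ 2 * Real.exp (Real.log θ * t) := by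
    intro t ht
    set n : ℕ := ⌊t⌋₊ with hn_def
    set L : ℝ := Real.log θ with hL_def
    have hn2 : t < (n:ℝ) + 1 := Nat.lt_floor_add_one t
    calc θ ^ n = Real.exp L ^ n := by rw [hL_def, Real.exp_log hθpos]
      _ = Real.exp ((n:ℝ) * L) := by rw [← Real.exp_nat_mul]
      _ ≤ Real.exp ((t - 1) * L) := by
          apply Real.exp_le_exp.mpr
          have := mul_le_mul_of_nonpos_right (by linarith : t - 1 ≤ (n:ℝ)) (le_of_lt hL)
          linarith
      _ = Real.exp (L * t) * θ⁻¹ := by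
          rw [show (t - 1) * L = L * t + (-L) by ring, Real.exp_add, Real.exp_neg,
            hL_def, Real.exp_log hθpos]
      _ ≤ Real.exp (L * t) * 2 := mul_le_mul_of_nonneg_left hinv2 (Real.exp_nonneg _)
      _ = 2 * Real.exp (L * t) := by ring
  have hbound : ∀ t : ℝ, 0 ≤ t → ∀ i j,
      |(exp ((-t) • D)) i j - A i j| ≤ 2 * Real.exp (Real.log θ * t) := by
    intro t ht i j
    exact le_trans (hboundθ t ht i j) (hgeom t ht)
  -- tendsto of individual entries
  have htendbound : Filter.Tendsto (fun t : ℝ => 2 * Real.exp (Real.log θ * t))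
      Filter.atTop (nhds 0) := by
    have hrt : Filter.Tendsto (fun t : ℝ => (-Real.log θ) * t) Filter.atTop Filter.atTop :=
      Filter.Tendsto.const_mul_atTop (by linarith) Filter.tendsto_id
    have h2 : Filter.Tendsto (fun t : ℝ => Real.log θ * t) Filter.atTop Filter.atBot := by
      have := Filter.tendsto_neg_atTop_atBot.comp hrt
      simpa [Function.comp_def, neg_mul, neg_neg] using this
    have h3 : Filter.Tendsto (fun t : ℝ => Real.exp (Real.log θ * t))
        Filter.atTop (nhds 0) := Real.tendsto_exp_atBot.comp h2
    simpa using h3.const_mul 2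
  have htend : ∀ i j, Filter.Tendsto (fun t : ℝ => (exp ((-t) • D)) i j)
      Filter.atTop (nhds (A i j)) := by
    intro i j
    rw [tendsto_iff_dist_tendsto_zero]
    apply squeeze_zero' (Filter.Eventually.of_forall fun t => dist_nonneg) _ htendbound
    refine Filter.eventually_atTop.mpr ⟨0, fun t ht => ?_⟩
    rw [Real.dist_eq]
    exact hbound t ht i j
  refine ⟨Matrix.of A, 2, -Real.log θ, by norm_num, by linarith, ?_, ?_⟩
  · intro t ht i j
    have h := hbound t ht i j
    simpa [Matrix.of_apply, neg_neg] using h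
  · intro w₀
    rw [tendsto_pi_nhds]
    intro i
    have hmv : ∀ t : ℝ, (exp ((-t) • D)).mulVec w₀ i
        = ∑ j, (exp ((-t) • D)) i j * w₀ j := by
      intro t; simp [Matrix.mulVec, dotProduct]
    have hmv2 : (Matrix.of A).mulVec w₀ i = ∑ j, A i j * w₀ j := by
      simp [Matrix.mulVec, dotProduct]
    simp only [hmv, hmv2]
    exact tendsto_finset_sum _ fun j _ => (htend i j).mul_const _
end

section
/- Let D be an m×m real irreducible matrix with d_ii ≥ 0, d_ij ≤ 0 for i ≠ j, zero row sums, and let Λ > 0 satisfy Dᵀ Λ = 0. Then the image of D equals the orthogonal complement of Λ, i.e., im(D) = {y ∈ R^m : ⟨Λ, y⟩ = 0}. -/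
/-- Kernel of `D` consists of constant vectors. -/
lemma ker_const {m : ℕ} (D : Matrix (Fin m) (Fin m) ℝ)
    (hoff : ∀ i j, i ≠ j → D i j ≤ 0)
    (hrow : ∀ i, ∑ j, D i j = 0)
    (hirr : MatIrreducible D)
    (u : Fin m → ℝ) (hu : D.mulVec u = 0) : ∃ c, u = fun _ => c := by
  rcases Nat.eq_zero_or_pos m with hm | hm
  · exact ⟨0, funext fun i => absurd i.2 (by omega)⟩
  haveI : Nonempty (Fin m) := ⟨⟨0, hm⟩⟩
  obtain ⟨i₀, -, hi₀⟩ := Finset.exists_max_image Finset.univ u ⟨Classical.arbitrary _, Finset.mem_univ _⟩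
  set M := u i₀ with hM
  set I : Finset (Fin m) := Finset.univ.filter (fun i => u i = M) with hI
  have hIne : I.Nonempty := ⟨i₀, by simp [hI, hM]⟩
  have hIuniv : I = Finset.univ := by
    by_contra hne
    obtain ⟨i, hiI, j, hjI, hDij⟩ := hirr I hIne hne
    have hui : u i = M := by simpa [hI] using hiI
    have huj : u j ≠ M := by simpa [hI] using hjI
    have hujle : u j ≤ M := hi₀ j (Finset.mem_univ j)
    have hujlt : u j < M := lt_of_le_of_ne hujle huj
    have hzero : ∑ k, D i k * (u k - M) = 0 := by
      have h1 : ∑ k, D i k * u k = 0 := congrFun hu i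
      have h2 : ∑ k, D i k * M = 0 := by
        rw [← Finset.sum_mul, hrow, zero_mul]
      calc ∑ k, D i k * (u k - M) = ∑ k, (D i k * u k - D i k * M) := by
            simp [mul_sub]
        _ = (∑ k, D i k * u k) - ∑ k, D i k * M := Finset.sum_sub_distrib _ _
        _ = 0 := by rw [h1, h2, sub_zero]
    have hnn : ∀ k ∈ Finset.univ, 0 ≤ D i k * (u k - M) := by
      intro k _
      rcases eq_or_ne k i with rfl | hk
      · simp [hui]
      · have h1 := hoff i k (Ne.symm hk)
        have h2 : u k - M ≤ 0 := sub_nonpos.mpr (hi₀ k (Finset.mem_univ k))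
        nlinarith
    have := (Finset.sum_eq_zero_iff_of_nonneg hnn).mp hzero j (Finset.mem_univ j)
    rcases mul_eq_zero.mp this with h | h
    · exact hDij h
    · exact (sub_ne_zero.mpr huj) h
  refine ⟨M, funext fun i => ?_⟩
  have : i ∈ I := hIuniv ▸ Finset.mem_univ i
  simpa [hI] using this

/-- For an irreducible matrix `D` with nonnegative diagonal, nonpositive off-diagonal
entries, zero row sums, and `Λ > 0` with `Dᵀ Λ = 0`, the image of `D` is the orthogonal
complement of `Λ`. -/
theorem image_eq_lambda_perp {m : ℕ}
    (D : Matrix (Fin m) (Fin m) ℝ)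
    (hdiag : ∀ i, 0 ≤ D i i)
    (hoff : ∀ i j, i ≠ j → D i j ≤ 0)
    (hrow : ∀ i, ∑ j, D i j = 0)
    (hirr : MatIrreducible D)
    (Λ : Fin m → ℝ) (hΛ : ∀ i, 0 < Λ i)
    (hker : D.transpose.mulVec Λ = 0) :
    {y : Fin m → ℝ | ∃ u : Fin m → ℝ, D.mulVec u = y} =
      {y : Fin m → ℝ | ∑ i, Λ i * y i = 0} := by
  rcases Nat.eq_zero_or_pos m with hm | hm
  · subst hm
    ext y
    simp only [Set.mem_setOf_eq, Finset.univ_eq_empty, Finset.sum_empty, iff_true]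
    exact ⟨0, funext fun i => absurd i.2 (by omega)⟩
  -- linear functional f y = ∑ Λ i * y i
  set f : (Fin m → ℝ) →ₗ[ℝ] ℝ :=
    { toFun := fun y => ∑ i, Λ i * y i
      map_add' := by intro x y; simp [mul_add, Finset.sum_add_distrib]
      map_smul' := by intro c y; simp [Finset.mul_sum, mul_left_comm] } with hf
  set L := Matrix.mulVecLin D with hL
  -- range L ≤ ker f
  have hle : LinearMap.range L ≤ LinearMap.ker f := by
    rintro y ⟨u, rfl⟩
    have : ∑ i, Λ i * (D.mulVec u) i = 0 := by
      have swap : ∑ i, Λ i * ∑ j, D i j * u j = ∑ j, (∑ i, D i j * Λ i) * u j := by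
        simp_rw [Finset.mul_sum, Finset.sum_mul]
        rw [Finset.sum_comm]
        congr 1; ext i; congr 1; ext j; ring
      have hz : ∀ j, ∑ i, D i j * Λ i = 0 := by
        intro j
        have := congrFun hker j
        simpa [Matrix.mulVec, dotProduct, Matrix.transpose] using this
      simp only [Matrix.mulVec, dotProduct]
      rw [swap]
      simp [hz]
    simpa [hf, hL] using this
  -- ker L = span of constant 1
  have hone : L (fun _ => (1:ℝ)) = 0 := by
    funext i
    simpa [hL, Matrix.mulVecLin, Matrix.mulVec, dotProduct] using hrow i
  have hkerL : LinearMap.ker L = Submodule.span ℝ {fun _ => (1:ℝ)} := by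
    apply le_antisymm
    · intro u hu
      obtain ⟨c, rfl⟩ := ker_const D hoff hrow hirr u (by simpa [hL] using hu)
      have : (fun _ => c : Fin m → ℝ) = c • (fun _ => (1:ℝ)) := by funext i; simp
      rw [this]
      exact Submodule.smul_mem _ _ (Submodule.mem_span_singleton_self _)
    · rw [Submodule.span_singleton_le_iff_mem]
      exact hone
  haveI : Nonempty (Fin m) := ⟨⟨0, hm⟩⟩
  have hone_ne : (fun _ => (1:ℝ)) ≠ (0 : Fin m → ℝ) := by
    intro h
    have := congrFun h (Classical.arbitrary _)
    norm_num at this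
  have hdimker : Module.finrank ℝ (LinearMap.ker L) = 1 := by
    rw [hkerL, finrank_span_singleton hone_ne]
  have hdimrange : Module.finrank ℝ (LinearMap.range L) = m - 1 := by
    have := LinearMap.finrank_range_add_finrank_ker L
    rw [hdimker] at this
    simp only [Module.finrank_pi, Fintype.card_fin] at this
    omega
  -- f ≠ 0, so ker f has dim m - 1
  have hfne : f ≠ 0 := by
    intro h
    have := congrFun (congrArg DFunLike.coe h) (Pi.single (Classical.arbitrary _) 1)
    simp [hf, Pi.single_apply] at this
    exact (hΛ _).ne' this
  have hdimkerf : Module.finrank ℝ (LinearMap.ker f) = m - 1 := by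
    have hr : LinearMap.range f = ⊤ := by
      obtain ⟨x, hx⟩ : ∃ x, f x ≠ 0 := by
        by_contra h
        push_neg at h
        exact hfne (LinearMap.ext fun x => by simpa using h x)
      rw [LinearMap.range_eq_top]
      intro r
      exact ⟨(r / f x) • x, by rw [map_smul, smul_eq_mul, div_mul_cancel₀ _ hx]⟩
    have := LinearMap.finrank_range_add_finrank_ker f
    rw [hr] at this
    simp only [Module.finrank_pi, Fintype.card_fin, finrank_top, Module.finrank_self] at this
    omega
  have heq : LinearMap.range L = LinearMap.ker f :=
    Submodule.eq_of_le_of_finrank_eq hle (by rw [hdimrange, hdimkerf])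
  ext y
  simp only [Set.mem_setOf_eq]
  constructor
  · intro ⟨u, hu⟩
    have : y ∈ LinearMap.range L := ⟨u, by simpa [hL] using hu⟩
    have := heq ▸ this
    simpa [hf] using this
  · intro hy
    have : y ∈ LinearMap.ker f := by simpa [hf] using hy
    obtain ⟨u, hu⟩ := heq ▸ this
    exact ⟨u, by simpa [hL] using hu⟩
end

section
/- The pair u(x,t) = (sin(x − t), sin(x − t)) is a classical solution of the system ∂u₁/∂t + |Du₁ + α| + u₁ − u₂ = α, ∂u₂/∂t + |Du₂ + β| − u₁ + u₂ = β on R × (0,∞) with initial data u₁(x,0) = u₂(x,0) = sin x, provided α, β > 1. Consequently u(·, t) does not converge as t → ∞. -/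
lemma deriv_t (x : ℝ) (t : ℝ) :
    deriv (fun s => Real.sin (x - s)) t = -Real.cos (x - t) := by
  have h : HasDerivAt (fun s : ℝ => Real.sin (x - s)) (Real.cos (x - t) * (0 - 1)) t := by
    exact (Real.hasDerivAt_sin (x - t)).comp t ((hasDerivAt_const t x).sub (hasDerivAt_id t))
  simpa using h.deriv

lemma deriv_x (x : ℝ) (t : ℝ) :
    deriv (fun y => Real.sin (y - t)) x = Real.cos (x - t) := by
  have h : HasDerivAt (fun y : ℝ => Real.sin (y - t)) (Real.cos (x - t) * (1 - 0)) x := by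
    exact (Real.hasDerivAt_sin (x - t)).comp x ((hasDerivAt_id x).sub (hasDerivAt_const x t))
  simpa using h.deriv

lemma eqn (γ : ℝ) (hγ : 1 < γ) (x t : ℝ) :
    deriv (fun s => Real.sin (x - s)) t
      + |deriv (fun y => Real.sin (y - t)) x + γ| = γ := by
  rw [deriv_t, deriv_x, abs_of_pos]
  · ring
  · nlinarith [Real.neg_one_le_cos (x - t)]

/-- For `α, β > 1`, `u₁(x,t) = u₂(x,t) = sin(x - t)` is a classical solution of the
weakly coupled system `∂ₜu₁ + |∂ₓu₁ + α| + u₁ - u₂ = α`,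
`∂ₜu₂ + |∂ₓu₂ + β| - u₁ + u₂ = β` with initial data `sin x`, and it does not converge
as `t → ∞`. -/
theorem counterexample_no_convergence (α β : ℝ) (hα : 1 < α) (hβ : 1 < β) :
    (∀ x t : ℝ,
      deriv (fun s => Real.sin (x - s)) t
        + |deriv (fun y => Real.sin (y - t)) x + α|
        + Real.sin (x - t) - Real.sin (x - t) = α) ∧
    (∀ x t : ℝ,
      deriv (fun s => Real.sin (x - s)) t
        + |deriv (fun y => Real.sin (y - t)) x + β|
        - Real.sin (x - t) + Real.sin (x - t) = β) ∧
    (∀ x : ℝ, Real.sin (x - 0) = Real.sin x) ∧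
    ¬ ∃ uLim : ℝ → ℝ, ∀ x : ℝ,
        Filter.Tendsto (fun t : ℝ => Real.sin (x - t)) Filter.atTop (nhds (uLim x)) := by
  refine ⟨fun x t => ?_, fun x t => ?_, fun x => by rw [sub_zero], ?_⟩
  · have := eqn α hα x t; linarith
  · have := eqn β hβ x t; linarith
  · rintro ⟨uLim, h⟩
    have h0 := h 0
    -- sequence t_n = -π/2 + 2πn : sin(0 - t_n) = sin(π/2 - 2πn) = 1
    have hs1 : Filter.Tendsto (fun n : ℕ => -(Real.pi/2) + 2 * Real.pi * n)
        Filter.atTop Filter.atTop := by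
      apply Filter.tendsto_atTop_add_const_left
      exact Filter.Tendsto.const_mul_atTop (by positivity) tendsto_natCast_atTop_atTop
    have hs2 : Filter.Tendsto (fun n : ℕ => (Real.pi/2) + 2 * Real.pi * n)
        Filter.atTop Filter.atTop := by
      apply Filter.tendsto_atTop_add_const_left
      exact Filter.Tendsto.const_mul_atTop (by positivity) tendsto_natCast_atTop_atTop
    have h1 : Filter.Tendsto (fun n : ℕ =>
        Real.sin (0 - (-(Real.pi/2) + 2 * Real.pi * n))) Filter.atTop (nhds (uLim 0)) :=
      h0.comp hs1
    have h2 : Filter.Tendsto (fun n : ℕ =>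
        Real.sin (0 - ((Real.pi/2) + 2 * Real.pi * n))) Filter.atTop (nhds (uLim 0)) :=
      h0.comp hs2
    have e1 : ∀ n : ℕ, Real.sin (0 - (-(Real.pi/2) + 2 * Real.pi * n)) = 1 := by
      intro n
      have : (0 : ℝ) - (-(Real.pi/2) + 2 * Real.pi * n) = Real.pi/2 - (n : ℕ) * (2 * Real.pi) := by
        push_cast; ring
      rw [this, Real.sin_sub_nat_mul_two_pi, Real.sin_pi_div_two]
    have e2 : ∀ n : ℕ, Real.sin (0 - ((Real.pi/2) + 2 * Real.pi * n)) = -1 := by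
      intro n
      have : (0 : ℝ) - ((Real.pi/2) + 2 * Real.pi * n) = -(Real.pi/2) - (n : ℕ) * (2 * Real.pi) := by
        push_cast; ring
      rw [this, Real.sin_sub_nat_mul_two_pi, Real.sin_neg, Real.sin_pi_div_two]
    simp only [e1] at h1
    simp only [e2] at h2
    have l1 : uLim 0 = 1 := tendsto_nhds_unique h1 tendsto_const_nhds
    have l2 : uLim 0 = -1 := tendsto_nhds_unique h2 tendsto_const_nhds
    linarith
end
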